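/- arXiv:1605.03569 — 8 statements merged into one kernel-verified Lean document; each statement's English description precedes it below -/
import Mathlib

section
/- Let T be a rooted tree and (T,c,p) a security system. Suppose (u,v) is an edge of T with p(u) ≥ p(v), and let p' be obtained from p by swapping the prizes of u and v. Then for every budget B, the maximum prize an attacker can obtain under (T,c,p') is at most that under (T,c,p). -/
open Classical in
/-- `maxp n par c p B`: the maximum total prize of a system attack (a rooted
subtree, encoded as a parent-closed set `A` of non-root vertices of the rooted
tree on `Fin (n+1)` with root `0` and parent function `par`; the edge with head
`v` has cost `c v` and the vertex `v` has prize `p v`) whose total edge-cost is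
at most the budget `B`. -/
noncomputable def maxp (n : ℕ) (par : Fin (n+1) → Fin (n+1))
    (c p : Fin (n+1) → ℚ) (B : ℚ) : ℚ :=
  ((((Finset.univ.filter (fun v : Fin (n+1) => v ≠ 0)).powerset).filter
      (fun A => (∀ v ∈ A, par v = 0 ∨ par v ∈ A) ∧ ∑ v ∈ A, c v ≤ B)).image
    (fun A => ∑ v ∈ A, p v)).max.unbotD 0

/-- The multiset of values of `f` over the non-root vertices. -/
def valsNR (n : ℕ) (f : Fin (n+1) → ℚ) : Multiset ℚ :=
  (Finset.univ.filter (fun v : Fin (n+1) => v ≠ 0)).val.map f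

/-- Swapping the prizes of the endpoints of an edge `(u,v)` with `p u ≥ p v`
never increases the attacker's maximum prize, for any budget. -/
theorem stmt0 (n : ℕ) (par : Fin (n+1) → Fin (n+1))
    (hpar : ∀ v : Fin (n+1), v ≠ 0 → (par v).val < v.val)
    (c p : Fin (n+1) → ℚ) (hc : ∀ v, 0 ≤ c v) (hp : ∀ v, 0 ≤ p v)
    (u v : Fin (n+1)) (hu : u ≠ 0) (hv : v ≠ 0) (hedge : par v = u)
    (hpuv : p v ≤ p u)
    (B : ℚ) (hB : 0 ≤ B) :
    maxp n par c (p ∘ Equiv.swap u v) B ≤ maxp n par c p B := by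
  classical
  unfold maxp
  set S := (((Finset.univ.filter (fun v : Fin (n+1) => v ≠ 0)).powerset).filter
      (fun A => (∀ v ∈ A, par v = 0 ∨ par v ∈ A) ∧ ∑ v ∈ A, c v ≤ B)) with hS
  have hSne : S.Nonempty := ⟨∅, by simp [hS, hB]⟩
  -- pointwise comparison
  have key : ∀ A ∈ S, ∑ w ∈ A, (p ∘ Equiv.swap u v) w ≤ ∑ w ∈ A, p w := by
    intro A hA
    simp only [hS, Finset.mem_filter, Finset.mem_powerset] at hA
    obtain ⟨hAsub, hclosed, hcost⟩ := hA
    have hvu : v ∈ A → u ∈ A := by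
      intro hvA
      rcases hclosed v hvA with h | h
      · exact absurd (hedge ▸ h) hu
      · exact hedge ▸ h
    by_cases huA : u ∈ A
    · by_cases hvA : v ∈ A
      · -- swap permutes A
        have : ∑ w ∈ A, (p ∘ Equiv.swap u v) w = ∑ w ∈ A, p w := by
          refine Finset.sum_equiv (Equiv.swap u v) ?_ ?_
          · intro i
            by_cases hiu : i = u
            · subst hiu; simp [Equiv.swap_apply_left, huA, hvA]
            · by_cases hiv : i = v
              · subst hiv; simp [Equiv.swap_apply_right, huA, hvA]
              · rw [Equiv.swap_apply_of_ne_of_ne hiu hiv]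
          · intro i _; rfl
        exact this.le
      · -- u ∈ A, v ∉ A
        rw [← Finset.sum_erase_add A _ huA, ← Finset.sum_erase_add A p huA]
        have h1 : ∑ w ∈ A.erase u, (p ∘ Equiv.swap u v) w = ∑ w ∈ A.erase u, p w := by
          refine Finset.sum_congr rfl ?_
          intro w hw
          have hwu : w ≠ u := (Finset.mem_erase.mp hw).1
          have hwv : w ≠ v := fun h => hvA (h ▸ (Finset.mem_erase.mp hw).2)
          simp [Function.comp, Equiv.swap_apply_of_ne_of_ne hwu hwv]
        rw [h1]
        have h2 : (p ∘ Equiv.swap u v) u = p v := by simp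
        rw [h2]
        exact add_le_add_right hpuv _
    · -- u ∉ A, hence v ∉ A
      have hvA : v ∉ A := fun h => huA (hvu h)
      have : ∑ w ∈ A, (p ∘ Equiv.swap u v) w = ∑ w ∈ A, p w := by
        refine Finset.sum_congr rfl ?_
        intro w hw
        have hwu : w ≠ u := fun h => huA (h ▸ hw)
        have hwv : w ≠ v := fun h => hvA (h ▸ hw)
        simp [Function.comp, Equiv.swap_apply_of_ne_of_ne hwu hwv]
      exact this.le
  have hne1 : (S.image (fun A => ∑ w ∈ A, (p ∘ Equiv.swap u v) w)).Nonempty :=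
    hSne.image _
  have hne2 : (S.image (fun A => ∑ w ∈ A, p w)).Nonempty := hSne.image _
  rw [← Finset.coe_max' hne1, ← Finset.coe_max' hne2]
  simp only [WithBot.unbotD_coe]
  apply Finset.max'_le
  intro y hy
  obtain ⟨A, hA, rfl⟩ := Finset.mem_image.mp hy
  exact le_trans (key A hA) ((Finset.le_max' _ (∑ w ∈ A, p w) (Finset.mem_image_of_mem (fun A => ∑ w ∈ A, p w) hA)))
end

section
/- Let T be a rooted tree and (T,c,p) a security system. Suppose (u,v) and (v,w) are incident edges of T with c((u,v)) ≤ c((v,w)), and let c' be obtained from c by swapping the costs of these two edges. Then for every budget B, the maximum prize an attacker can obtain under (T,c',p) is at most that under (T,c,p). -/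
/-- Swapping the costs of incident edges `(u,v)`, `(v,w)` with
`c (u,v) ≤ c (v,w)` never increases the attacker's maximum prize. -/
theorem stmt1 (n : ℕ) (par : Fin (n+1) → Fin (n+1))
    (hpar : ∀ x : Fin (n+1), x ≠ 0 → (par x).val < x.val)
    (c p : Fin (n+1) → ℚ) (hc : ∀ x, 0 ≤ c x) (hp : ∀ x, 0 ≤ p x)
    (v w : Fin (n+1)) (hv : v ≠ 0) (hw : w ≠ 0) (hedge : par w = v)
    (hcvw : c v ≤ c w)
    (B : ℚ) (hB : 0 ≤ B) :
    maxp n par (c ∘ Equiv.swap v w) p B ≤ maxp n par c p B := by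
  classical
  unfold maxp
  -- the filtered family for the swapped costs is contained in that for `c`
  have hsub : (((Finset.univ.filter (fun v : Fin (n+1) => v ≠ 0)).powerset).filter
      (fun A => (∀ x ∈ A, par x = 0 ∨ par x ∈ A) ∧
        ∑ x ∈ A, (c ∘ Equiv.swap v w) x ≤ B)) ⊆
      (((Finset.univ.filter (fun v : Fin (n+1) => v ≠ 0)).powerset).filter
      (fun A => (∀ x ∈ A, par x = 0 ∨ par x ∈ A) ∧ ∑ x ∈ A, c x ≤ B)) := by
    intro A hA
    simp only [Finset.mem_filter] at hA ⊢
    obtain ⟨hpow, hclosed, hcost⟩ := hA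
    refine ⟨hpow, hclosed, le_trans ?_ hcost⟩
    -- w ∈ A → v ∈ A
    have hwv : w ∈ A → v ∈ A := by
      intro hwA
      rcases hclosed w hwA with h0 | hin
      · exact absurd (hedge ▸ h0) hv
      · exact hedge ▸ hin
    by_cases hvA : v ∈ A
    · by_cases hwA : w ∈ A
      · -- swap permutes A
        refine le_of_eq (Finset.sum_equiv (Equiv.swap v w) ?_ fun i _ => rfl).symm
        intro i
        rcases eq_or_ne i v with rfl | hiv
        · simp [Equiv.swap_apply_left, hvA, hwA]
        rcases eq_or_ne i w with rfl | hiw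
        · simp [Equiv.swap_apply_right, hvA, hwA]
        · rw [Equiv.swap_apply_of_ne_of_ne hiv hiw]
      · refine Finset.sum_le_sum fun i hi => ?_
        rcases eq_or_ne i v with rfl | hiv
        · simpa [Equiv.swap_apply_left] using hcvw
        · have hiw : i ≠ w := fun h => hwA (h ▸ hi)
          simp [Equiv.swap_apply_of_ne_of_ne hiv hiw]
    · have hwA : w ∉ A := fun h => hvA (hwv h)
      refine le_of_eq (Finset.sum_congr rfl fun i hi => ?_).symm
      have hiv : i ≠ v := fun h => hvA (h ▸ hi)
      have hiw : i ≠ w := fun h => hwA (h ▸ hi)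
      simp [Equiv.swap_apply_of_ne_of_ne hiv hiw]
  have himg := Finset.image_subset_image (f := fun A => ∑ x ∈ A, p x) hsub
  have hmax := Finset.max_mono himg
  set s := (((Finset.univ.filter (fun v : Fin (n+1) => v ≠ 0)).powerset).filter
      (fun A => (∀ x ∈ A, par x = 0 ∨ par x ∈ A) ∧
        ∑ x ∈ A, (c ∘ Equiv.swap v w) x ≤ B)).image (fun A => ∑ x ∈ A, p x) with hs
  set t := (((Finset.univ.filter (fun v : Fin (n+1) => v ≠ 0)).powerset).filter
      (fun A => (∀ x ∈ A, par x = 0 ∨ par x ∈ A) ∧ ∑ x ∈ A, c x ≤ B)).image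
      (fun A => ∑ x ∈ A, p x) with ht0
  have h0 : (0 : ℚ) ∈ t := by
    refine Finset.mem_image.2 ⟨∅, ?_, by simp⟩
    simp [hB]
  have hge : ((0 : ℚ) : WithBot ℚ) ≤ t.max := Finset.le_max h0
  rcases hm : s.max with _ | a
  · rcases htm : t.max with _ | b
    · exact le_refl _
    · rw [htm] at hge
      exact WithBot.coe_le_coe.mp hge
  · rw [hm] at hmax
    rcases htm : t.max with _ | b
    · rw [htm] at hmax
      exact (WithBot.not_coe_le_bot a hmax).elim
    · rw [htm] at hmax
      exact WithBot.coe_le_coe.mp hmax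
end

section
/- Let T be a star with root r (the center) and leaves u₁,…,uₙ with edges eᵢ = (r,uᵢ). Let (T,c,p) be a security system with edge costs c(eᵢ) = cᵢ ordered c₁ ≤ ⋯ ≤ cₙ and prizes p(uᵢ) = pᵢ. If p' is obtained from p by swapping prizes pᵢ and pⱼ where i < j and pᵢ ≤ pⱼ, then for every budget B, maxp(B,c,p) ≤ maxp(B,c,p'). -/
/-- On a star rooted at its center (every non-root vertex is a child of the
root `0`) with edge costs increasing in the index, swapping prizes
`pᵢ ≤ pⱼ` for `i < j` never decreases the attacker's maximum prize. -/
theorem stmt7 (n : ℕ) (c p : Fin (n+1) → ℚ)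
    (hc : ∀ v, 0 ≤ c v) (hp : ∀ v, 0 ≤ p v)
    (hcinc : ∀ v w : Fin (n+1), v ≠ 0 → v ≤ w → c v ≤ c w)
    (i j : Fin (n+1)) (hi : i ≠ 0) (hij : i < j) (hpij : p i ≤ p j)
    (B : ℚ) (hB : 0 ≤ B) :
    maxp n (fun _ => 0) c p B ≤ maxp n (fun _ => 0) c (p ∘ Equiv.swap i j) B := by
  classical
  set p' : Fin (n+1) → ℚ := p ∘ Equiv.swap i j with hp'def
  have key : ∀ A : Finset (Fin (n+1)),
      A ⊆ Finset.univ.filter (fun v : Fin (n+1) => v ≠ 0) →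
      ∑ v ∈ A, c v ≤ B →
      ∃ A' : Finset (Fin (n+1)),
        A' ⊆ Finset.univ.filter (fun v : Fin (n+1) => v ≠ 0) ∧
        ∑ v ∈ A', c v ≤ B ∧ ∑ v ∈ A, p v ≤ ∑ v ∈ A', p' v := by
    intro A hA hAc
    by_cases hjA : j ∈ A
    · by_cases hiA : i ∈ A
      · refine ⟨A, hA, hAc, le_of_eq ?_⟩
        refine Finset.sum_equiv (Equiv.swap i j) ?_ ?_ |>.symm
        · intro v
          rcases eq_or_ne v i with rfl | hvi
          · simp [Equiv.swap_apply_left, hiA, hjA]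
          rcases eq_or_ne v j with rfl | hvj
          · simp [Equiv.swap_apply_right, hiA, hjA]
          · simp [Equiv.swap_apply_of_ne_of_ne hvi hvj]
        · intro v _; rfl
      · refine ⟨insert i (A.erase j), ?_, ?_, ?_⟩
        · intro v hv
          rcases Finset.mem_insert.mp hv with rfl | hv
          · simp [hi]
          · exact hA (Finset.mem_of_mem_erase hv)
        · have h1 : i ∉ A.erase j := fun h => hiA (Finset.mem_of_mem_erase h)
          rw [Finset.sum_insert h1, Finset.sum_erase_eq_sub hjA]
          have := hcinc i j hi hij.le
          linarith
        · have h1 : i ∉ A.erase j := fun h => hiA (Finset.mem_of_mem_erase h)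
          rw [Finset.sum_insert h1]
          have h2 : ∀ v ∈ A.erase j, p' v = p v := by
            intro v hv
            have hvj : v ≠ j := Finset.ne_of_mem_erase hv
            have hvi : v ≠ i := fun h => hiA (h ▸ Finset.mem_of_mem_erase hv)
            simp [hp'def, Equiv.swap_apply_of_ne_of_ne hvi hvj]
          rw [Finset.sum_congr rfl h2]
          have h3 : p' i = p j := by simp [hp'def]
          rw [h3, Finset.add_sum_erase _ _ hjA]
    · refine ⟨A, hA, hAc, Finset.sum_le_sum ?_⟩
      intro v hv
      rcases eq_or_ne v i with rfl | hvi
      · simpa [hp'def] using hpij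
      · have hvj : v ≠ j := fun h => hjA (h ▸ hv)
        simp [hp'def, Equiv.swap_apply_of_ne_of_ne hvi hvj]
  unfold maxp
  set S : (Fin (n+1) → ℚ) → Finset (Finset (Fin (n+1))) := fun q =>
    (((Finset.univ.filter (fun v : Fin (n+1) => v ≠ 0)).powerset).filter
      (fun A => (∀ v ∈ A, (fun _ => (0 : Fin (n+1))) v = 0 ∨ (fun _ => (0:Fin (n+1))) v ∈ A) ∧ ∑ v ∈ A, c v ≤ B)) with hS
  have hSmem : ∀ q A, A ∈ S q ↔
      (A ⊆ Finset.univ.filter (fun v : Fin (n+1) => v ≠ 0) ∧ ∑ v ∈ A, c v ≤ B) := by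
    intro q A
    simp [hS, Finset.mem_filter, Finset.mem_powerset, and_assoc]
  have hub : ∀ x ∈ (S p').image (fun A => ∑ v ∈ A, p' v),
      x ≤ ((S p').image (fun A => ∑ v ∈ A, p' v)).max.unbotD 0 := by
    intro x hx
    have h := Finset.le_max hx
    rcases hmax : ((S p').image (fun A => ∑ v ∈ A, p' v)).max with _ | m
    · rw [hmax] at h; exact absurd h (WithBot.not_coe_le_bot x)
    · rw [hmax, WithBot.some_eq_coe] at h
      have hxm : x ≤ m := by exact_mod_cast h
      exact hxm
  show ((S p).image (fun A => ∑ v ∈ A, p v)).max.unbotD 0 ≤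
      ((S p').image (fun A => ∑ v ∈ A, p' v)).max.unbotD 0
  rcases Finset.eq_empty_or_nonempty ((S p).image (fun A => ∑ v ∈ A, p v)) with h1 | h1
  · rw [h1]
    simp only [Finset.max_empty, WithBot.unbotD_bot]
    refine hub 0 (Finset.mem_image.mpr ⟨∅, (hSmem p' ∅).mpr ⟨by simp, by simpa using hB⟩, by simp⟩)
  · obtain ⟨m, hm⟩ := Finset.max_of_nonempty h1
    rw [hm]
    have hmem : m ∈ (S p).image (fun A => ∑ v ∈ A, p v) := Finset.mem_of_max hm
    obtain ⟨A, hAS, hAm⟩ := Finset.mem_image.mp hmem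
    obtain ⟨hA1, hA2⟩ := (hSmem p A).mp hAS
    obtain ⟨A', hA'1, hA'2, hle⟩ := key A hA1 hA2
    have hmem' : (∑ v ∈ A', p' v) ∈ (S p').image (fun A => ∑ v ∈ A, p' v) :=
      Finset.mem_image.mpr ⟨A', (hSmem p' A').mpr ⟨hA'1, hA'2⟩, rfl⟩
    calc WithBot.unbotD 0 (some m) = m := rfl
      _ ≤ ∑ v ∈ A', p' v := hAm ▸ hle
      _ ≤ _ := hub _ hmem'
end

section
/- Let T be a star rooted at its center with n leaves and M = (T,C,P) a cyber-security model. The security system that assigns the prizes to the leaves in increasing order matched with the costs assigned to the corresponding edges in increasing order (smallest prize with smallest cost, etc.) is optimal: for every budget B it minimizes the attacker's maximum prize over all security systems for M. -/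
namespace Star8

open Finset

/-- The non-root vertices. -/
abbrev NZ (n : ℕ) : Finset (Fin (n+1)) := Finset.univ.filter (fun v : Fin (n+1) => v ≠ 0)

open Classical in
/-- The set of attacks on the star with costs `c` and budget `B`. -/
noncomputable def atk (n : ℕ) (c : Fin (n+1) → ℚ) (B : ℚ) : Finset (Finset (Fin (n+1))) :=
  (((Finset.univ.filter (fun v : Fin (n+1) => v ≠ 0)).powerset).filter
      (fun A => (∀ v ∈ A, (fun _ : Fin (n+1) => (0 : Fin (n+1))) v = 0 ∨
        (fun _ : Fin (n+1) => (0 : Fin (n+1))) v ∈ A) ∧ ∑ v ∈ A, c v ≤ B))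

lemma maxp_eq (n : ℕ) (c p : Fin (n+1) → ℚ) (B : ℚ) :
    maxp n (fun _ => 0) c p B = ((atk n c B).image (fun A => ∑ v ∈ A, p v)).max.unbotD 0 := rfl

lemma mem_atk {n : ℕ} {c : Fin (n+1) → ℚ} {B : ℚ} {A : Finset (Fin (n+1))} :
    A ∈ atk n c B ↔ A ⊆ NZ n ∧ ∑ v ∈ A, c v ≤ B := by
  classical
  simp [atk, Finset.mem_filter, Finset.mem_powerset, NZ]

lemma le_maxp {n : ℕ} {c p : Fin (n+1) → ℚ} {B : ℚ} {A : Finset (Fin (n+1))}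
    (hA : A ⊆ NZ n) (hcost : ∑ v ∈ A, c v ≤ B) :
    ∑ v ∈ A, p v ≤ maxp n (fun _ => 0) c p B := by
  rw [maxp_eq]
  have h1 : (∑ v ∈ A, p v) ∈ (atk n c B).image (fun A => ∑ v ∈ A, p v) :=
    Finset.mem_image_of_mem _ (mem_atk.2 ⟨hA, hcost⟩)
  have h2 := Finset.le_max h1
  rcases hmax : ((atk n c B).image (fun A => ∑ v ∈ A, p v)).max with _ | m
  · rw [hmax] at h2; exact absurd h2 (WithBot.not_coe_le_bot _)
  · rw [hmax] at h2
    have h3 : (∑ v ∈ A, p v : ℚ) ≤ m := WithBot.coe_le_coe.1 h2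
    exact h3

lemma maxp_nonneg {n : ℕ} {c p : Fin (n+1) → ℚ} {B : ℚ} (hB : 0 ≤ B) :
    0 ≤ maxp n (fun _ => 0) c p B := by
  have := le_maxp (n := n) (c := c) (p := p) (A := ∅) (by simp) (by simpa using hB)
  simpa using this

lemma maxp_le {n : ℕ} {c p : Fin (n+1) → ℚ} {B x : ℚ} (hx : 0 ≤ x)
    (h : ∀ A : Finset (Fin (n+1)), A ⊆ NZ n → ∑ v ∈ A, c v ≤ B → ∑ v ∈ A, p v ≤ x) :
    maxp n (fun _ => 0) c p B ≤ x := by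
  rw [maxp_eq]
  rcases hmax : ((atk n c B).image (fun A => ∑ v ∈ A, p v)).max with _ | m
  · exact hx
  · have hm : m ∈ (atk n c B).image (fun A => ∑ v ∈ A, p v) := Finset.mem_of_max hmax
    obtain ⟨A, hAmem, rfl⟩ := Finset.mem_image.1 hm
    obtain ⟨h1, h2⟩ := mem_atk.1 hAmem
    exact h A h1 h2

/-- Transfer lemma: if every attack on `(c, p)` is dominated by an attack on
`(c', p')`, then `maxp` compares. -/
lemma maxp_le_maxp {n : ℕ} {c p c' p' : Fin (n+1) → ℚ} {B : ℚ} (hB : 0 ≤ B)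
    (h : ∀ A : Finset (Fin (n+1)), A ⊆ NZ n → ∑ v ∈ A, c v ≤ B →
      ∃ A' : Finset (Fin (n+1)), A' ⊆ NZ n ∧ ∑ v ∈ A', c' v ≤ B ∧
        ∑ v ∈ A, p v ≤ ∑ v ∈ A', p' v) :
    maxp n (fun _ => 0) c p B ≤ maxp n (fun _ => 0) c' p' B := by
  refine maxp_le (maxp_nonneg hB) (fun A hA hcost => ?_)
  obtain ⟨A', hA', hc', hp'⟩ := h A hA hcost
  exact hp'.trans (le_maxp hA' hc')

lemma maxp_congr {n : ℕ} {c p c' p' : Fin (n+1) → ℚ} {B : ℚ} (hB : 0 ≤ B)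
    (hc : ∀ v : Fin (n+1), v ≠ 0 → c v = c' v) (hp : ∀ v : Fin (n+1), v ≠ 0 → p v = p' v) :
    maxp n (fun _ => 0) c p B = maxp n (fun _ => 0) c' p' B := by
  have key : ∀ (c p c' p' : Fin (n+1) → ℚ), (∀ v : Fin (n+1), v ≠ 0 → c v = c' v) →
      (∀ v : Fin (n+1), v ≠ 0 → p v = p' v) →
      maxp n (fun _ => 0) c p B ≤ maxp n (fun _ => 0) c' p' B := by
    intro c p c' p' hc hp
    refine maxp_le_maxp hB (fun A hA hcost => ⟨A, hA, ?_, ?_⟩)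
    · calc ∑ v ∈ A, c' v = ∑ v ∈ A, c v :=
            Finset.sum_congr rfl (fun v hv => (hc v (by simpa using hA hv)).symm)
        _ ≤ B := hcost
    · exact le_of_eq (Finset.sum_congr rfl (fun v hv => hp v (by simpa using hA hv)))
  exact le_antisymm (key c p c' p' hc hp)
    (key c' p' c p (fun v hv => (hc v hv).symm) (fun v hv => (hp v hv).symm))

lemma valsNR_eq_ofFn {n : ℕ} (f : Fin (n+1) → ℚ) :
    valsNR n f = ↑(List.ofFn (fun i : Fin n => f i.succ)) := by
  classical
  have hNZ : (Finset.univ.filter (fun v : Fin (n+1) => v ≠ 0)) =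
      Finset.map ⟨Fin.succ, Fin.succ_injective n⟩ Finset.univ := by
    ext v
    simp only [Finset.mem_filter, Finset.mem_univ, true_and, Finset.mem_map,
      Function.Embedding.coeFn_mk]
    exact Fin.exists_succ_eq.symm
  rw [valsNR, hNZ, Finset.map_val, Multiset.map_map]
  simpa using Fin.univ_val_map (fun i : Fin n => f i.succ)

/-- Two functions increasing on the non-root vertices with the same multiset of
values agree on non-root vertices. -/
lemma eq_of_sorted {n : ℕ} {f g : Fin (n+1) → ℚ}
    (hf : ∀ v w : Fin (n+1), v ≠ 0 → v ≤ w → f v ≤ f w)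
    (hg : ∀ v w : Fin (n+1), v ≠ 0 → v ≤ w → g v ≤ g w)
    (hvals : valsNR n f = valsNR n g) :
    ∀ v : Fin (n+1), v ≠ 0 → f v = g v := by
  have hmono : ∀ h : Fin (n+1) → ℚ, (∀ v w : Fin (n+1), v ≠ 0 → v ≤ w → h v ≤ h w) →
      Monotone (fun i : Fin n => h i.succ) := by
    intro h hh i j hij
    exact hh i.succ j.succ (Fin.succ_ne_zero i) (by simpa using hij)
  have h1 : (List.ofFn (fun i : Fin n => f i.succ)) = (List.ofFn (fun i : Fin n => g i.succ)) := by
    have hperm : List.Perm (List.ofFn (fun i : Fin n => f i.succ)) (List.ofFn (fun i : Fin n => g i.succ)) :=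
      Multiset.coe_eq_coe.1 (by rw [← valsNR_eq_ofFn, ← valsNR_eq_ofFn, hvals])
    have hs1 : (List.ofFn (fun i : Fin n => f i.succ)).SortedLE :=
      List.sortedLE_ofFn_iff.2 (hmono f hf)
    have hs2 : (List.ofFn (fun i : Fin n => g i.succ)).SortedLE :=
      List.sortedLE_ofFn_iff.2 (hmono g hg)
    exact List.Perm.eq_of_sortedLE hs1 hs2 hperm
  have h2 : (fun i : Fin n => f i.succ) = (fun i : Fin n => g i.succ) := List.ofFn_inj.1 h1
  intro v hv
  have := congrFun h2 (v.pred hv)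
  simpa [Fin.succ_pred] using this

lemma valsNR_comp_perm {n : ℕ} (f : Fin (n+1) → ℚ) (ρ : Equiv.Perm (Fin (n+1)))
    (hρ : ρ 0 = 0) : valsNR n (f ∘ ρ) = valsNR n f := by
  classical
  have himg : Finset.image ρ (Finset.univ.filter (fun v : Fin (n+1) => v ≠ 0)) =
      (Finset.univ.filter (fun v : Fin (n+1) => v ≠ 0)) := by
    ext w
    simp only [Finset.mem_image, Finset.mem_filter, Finset.mem_univ, true_and]
    constructor
    · rintro ⟨x, hx, rfl⟩
      exact fun h0 => hx (ρ.injective (h0.trans hρ.symm))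
    · intro hw
      refine ⟨ρ.symm w, fun h0 => hw ?_, by simp⟩
      have : ρ (ρ.symm w) = ρ 0 := congrArg ρ h0
      simpa [hρ] using this
  have hval : ((Finset.univ.filter (fun v : Fin (n+1) => v ≠ 0)).val).map ρ =
      (Finset.univ.filter (fun v : Fin (n+1) => v ≠ 0)).val := by
    rw [← Finset.image_val_of_injOn (ρ.injective.injOn), himg]
  rw [valsNR, valsNR]
  conv_rhs => rw [← hval, Multiset.map_map]

lemma maxp_comp_perm_le {n : ℕ} (c p : Fin (n+1) → ℚ) (B : ℚ) (hB : 0 ≤ B)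
    (ρ : Equiv.Perm (Fin (n+1))) (hρ : ρ 0 = 0) :
    maxp n (fun _ => 0) (c ∘ ρ) (p ∘ ρ) B ≤ maxp n (fun _ => 0) c p B := by
  refine maxp_le_maxp hB (fun A hA hcost => ?_)
  refine ⟨A.image ρ, ?_, ?_, ?_⟩
  · intro w hw
    obtain ⟨x, hx, rfl⟩ := Finset.mem_image.1 hw
    have hx0 : x ≠ 0 := by simpa using hA hx
    simp only [NZ, Finset.mem_filter, Finset.mem_univ, true_and]
    exact fun h0 => hx0 (ρ.injective (h0.trans hρ.symm))
  · rw [Finset.sum_image (fun x _ y _ h => ρ.injective h)]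
    exact hcost
  · rw [Finset.sum_image (fun x _ y _ h => ρ.injective h)]
    exact le_rfl

lemma maxp_comp_perm {n : ℕ} (c p : Fin (n+1) → ℚ) (B : ℚ) (hB : 0 ≤ B)
    (ρ : Equiv.Perm (Fin (n+1))) (hρ : ρ 0 = 0) :
    maxp n (fun _ => 0) (c ∘ ρ) (p ∘ ρ) B = maxp n (fun _ => 0) c p B := by
  refine le_antisymm (maxp_comp_perm_le c p B hB ρ hρ) ?_
  have hρ' : ρ.symm 0 = 0 := ρ.injective (by simp [hρ])
  have h := maxp_comp_perm_le (c ∘ ρ) (p ∘ ρ) B hB ρ.symm hρ'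
  have hc : (c ∘ ρ) ∘ ρ.symm = c := by funext x; simp
  have hp : (p ∘ ρ) ∘ ρ.symm = p := by funext x; simp
  rwa [hc, hp] at h

/-- Swap lemma: aligning a larger prize with a larger cost does not increase `maxp`. -/
lemma maxp_swap_le {n : ℕ} (c q : Fin (n+1) → ℚ) (B : ℚ) (hB : 0 ≤ B)
    {u v : Fin (n+1)} (hu : u ≠ 0) (hv : v ≠ 0) (huv : u ≠ v)
    (hcuv : c u ≤ c v) (hq : q v ≤ q u) :
    maxp n (fun _ => 0) c (fun w => if w = u then q v else if w = v then q u else q w) B ≤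
      maxp n (fun _ => 0) c q B := by
  classical
  set q2 : Fin (n+1) → ℚ := fun w => if w = u then q v else if w = v then q u else q w with hq2
  refine maxp_le_maxp hB (fun A hA hcost => ?_)
  by_cases hvA : v ∈ A
  · by_cases huA : u ∈ A
    · -- both in A : keep A, prizes are a permutation
      refine ⟨A, hA, hcost, le_of_eq ?_⟩
      refine Finset.sum_nbij' (fun w => Equiv.swap u v w) (fun w => Equiv.swap u v w)
        ?_ ?_ ?_ ?_ ?_
      · intro a ha
        rcases eq_or_ne a u with rfl | hau
        · simpa [Equiv.swap_apply_left] using hvA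
        rcases eq_or_ne a v with rfl | hav
        · simpa [Equiv.swap_apply_right] using huA
        · simpa [Equiv.swap_apply_of_ne_of_ne hau hav] using ha
      · intro a ha
        rcases eq_or_ne a u with rfl | hau
        · simpa [Equiv.swap_apply_left] using hvA
        rcases eq_or_ne a v with rfl | hav
        · simpa [Equiv.swap_apply_right] using huA
        · simpa [Equiv.swap_apply_of_ne_of_ne hau hav] using ha
      · intro a _; simp
      · intro a _; simp
      · intro a _
        rcases eq_or_ne a u with rfl | hau
        · simp [q2, Equiv.swap_apply_left, huv]
        rcases eq_or_ne a v with rfl | hav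
        · simp [q2, Equiv.swap_apply_right, huv.symm]
        · simp [q2, Equiv.swap_apply_of_ne_of_ne hau hav, hau, hav]
    · -- v ∈ A, u ∉ A : replace v by u
      refine ⟨insert u (A.erase v), ?_, ?_, ?_⟩
      · intro w hw
        rcases Finset.mem_insert.1 hw with rfl | hw'
        · simp [hu]
        · exact hA (Finset.mem_of_mem_erase hw')
      · rw [Finset.sum_insert (fun h => huA (Finset.mem_of_mem_erase h))]
        have herase : ∑ w ∈ A.erase v, c w + c v = ∑ w ∈ A, c w :=
          Finset.sum_erase_add A c hvA
        have h1 : c u + ∑ w ∈ A.erase v, c w ≤ ∑ w ∈ A, c w := by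
          rw [← herase]; linarith
        exact h1.trans hcost
      · rw [Finset.sum_insert (fun h => huA (Finset.mem_of_mem_erase h))]
        have h1 : ∑ w ∈ A, q2 w = q2 v + ∑ w ∈ A.erase v, q2 w :=
          (Finset.add_sum_erase A q2 hvA).symm
        have h2 : ∑ w ∈ A.erase v, q2 w = ∑ w ∈ A.erase v, q w := by
          refine Finset.sum_congr rfl (fun w hw => ?_)
          have hwv : w ≠ v := Finset.ne_of_mem_erase hw
          have hwu : w ≠ u := fun h => huA (h ▸ Finset.mem_of_mem_erase hw)
          simp [q2, hwu, hwv]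
        have h3 : q2 v = q u := by simp [q2, huv.symm]
        rw [h1, h2, h3]
  · -- v ∉ A : keep A, compare pointwise
    refine ⟨A, hA, hcost, Finset.sum_le_sum (fun w hw => ?_)⟩
    have hwv : w ≠ v := fun h => hvA (h ▸ hw)
    rcases eq_or_ne w u with rfl | hwu
    · simpa [q2] using hq
    · simp [q2, hwu, hwv]

/-- Selection-sort induction: if `p''` agrees with the sorted `p` above position `m`
and has the same multiset of values, the sorted `maxp` is at most that of `p''`. -/
lemma key_step {n : ℕ} (c p : Fin (n+1) → ℚ)
    (hcinc : ∀ v w : Fin (n+1), v ≠ 0 → v ≤ w → c v ≤ c w)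
    (hpinc : ∀ v w : Fin (n+1), v ≠ 0 → v ≤ w → p v ≤ p w)
    (B : ℚ) (hB : 0 ≤ B) :
    ∀ m : ℕ, ∀ p'' : Fin (n+1) → ℚ, valsNR n p'' = valsNR n p →
      (∀ w : Fin (n+1), w ≠ 0 → m < (w : ℕ) → p'' w = p w) →
      maxp n (fun _ => 0) c p B ≤ maxp n (fun _ => 0) c p'' B := by
  intro m
  induction m with
  | zero =>
    intro p'' hvals hagree
    refine le_of_eq (maxp_congr hB (fun v _ => rfl) (fun v hv => ?_))
    refine (hagree v hv ?_).symm
    have : (v : ℕ) ≠ 0 := fun h => hv (Fin.ext (by simpa using h))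
    omega
  | succ m ih =>
    intro p'' hvals hagree
    by_cases hall : ∀ w : Fin (n+1), w ≠ 0 → m < (w : ℕ) → p'' w = p w
    · exact ih p'' hvals hall
    · push_neg at hall
      obtain ⟨v, hv0, hvm, hvne⟩ := hall
      have hvm1 : (v : ℕ) = m + 1 := by
        by_contra h
        exact hvne (hagree v hv0 (by omega))
      -- multisets of values on positions ≤ v agree
      have hsplit : ∀ f : Fin (n+1) → ℚ,
          valsNR n f =
            Multiset.map f (Multiset.filter (fun w => w ≤ v)
              (Finset.univ.filter (fun w : Fin (n+1) => w ≠ 0)).val) +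
            Multiset.map f (Multiset.filter (fun w => ¬ w ≤ v)
              (Finset.univ.filter (fun w : Fin (n+1) => w ≠ 0)).val) := by
        intro f
        rw [valsNR]
        conv_lhs => rw [← Multiset.filter_add_not (fun w => w ≤ v)
          (Finset.univ.filter (fun w : Fin (n+1) => w ≠ 0)).val]
        rw [Multiset.map_add]
      have hmem_ne : ∀ w : Fin (n+1),
          w ∈ (Finset.univ.filter (fun w : Fin (n+1) => w ≠ 0)).val → w ≠ 0 := by
        intro w hw
        rw [Finset.mem_val] at hw
        simpa using (Finset.mem_filter.1 hw).2
      have hhigh : Multiset.map p'' (Multiset.filter (fun w => ¬ w ≤ v)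
            (Finset.univ.filter (fun w : Fin (n+1) => w ≠ 0)).val) =
          Multiset.map p (Multiset.filter (fun w => ¬ w ≤ v)
            (Finset.univ.filter (fun w : Fin (n+1) => w ≠ 0)).val) := by
        refine Multiset.map_congr rfl (fun w hw => ?_)
        have hw' := Multiset.mem_filter.1 hw
        have hw0 : w ≠ 0 := hmem_ne w hw'.1
        have hwgt : v < w := lt_of_not_ge hw'.2
        have hcoe : (v : ℕ) < (w : ℕ) := hwgt
        exact hagree w hw0 (by omega)
      have hlow : Multiset.map p'' (Multiset.filter (fun w => w ≤ v)
            (Finset.univ.filter (fun w : Fin (n+1) => w ≠ 0)).val) =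
          Multiset.map p (Multiset.filter (fun w => w ≤ v)
            (Finset.univ.filter (fun w : Fin (n+1) => w ≠ 0)).val) := by
        have h2 := hsplit p
        rw [← hvals, hsplit p'', hhigh] at h2
        exact add_right_cancel h2
      have hvmem : v ∈ Multiset.filter (fun w => w ≤ v)
          (Finset.univ.filter (fun w : Fin (n+1) => w ≠ 0)).val := by
        rw [Multiset.mem_filter]
        refine ⟨?_, le_rfl⟩
        rw [Finset.mem_val]
        simp [hv0]
      have hpv_mem : p v ∈ Multiset.map p'' (Multiset.filter (fun w => w ≤ v)
          (Finset.univ.filter (fun w : Fin (n+1) => w ≠ 0)).val) := by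
        rw [hlow]
        exact Multiset.mem_map_of_mem p hvmem
      obtain ⟨u, hu_mem, hu_eq⟩ := Multiset.mem_map.1 hpv_mem
      have hu' := Multiset.mem_filter.1 hu_mem
      have hu0 : u ≠ 0 := hmem_ne u hu'.1
      have huv_le : u ≤ v := hu'.2
      have hppv : p'' v ≤ p v := by
        have hmem : p'' v ∈ Multiset.map p (Multiset.filter (fun w => w ≤ v)
            (Finset.univ.filter (fun w : Fin (n+1) => w ≠ 0)).val) := by
          rw [← hlow]
          exact Multiset.mem_map_of_mem p'' hvmem
        obtain ⟨w, hw_mem, hw_eq⟩ := Multiset.mem_map.1 hmem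
        have hw' := Multiset.mem_filter.1 hw_mem
        exact hw_eq ▸ hpinc w v (hmem_ne w hw'.1) hw'.2
      have huvne : u ≠ v := by
        rintro rfl
        exact hvne hu_eq
      set p3 : Fin (n+1) → ℚ := fun w => if w = u then p'' v else if w = v then p'' u else p'' w
        with hp3
      have hp3perm : p3 = p'' ∘ (Equiv.swap u v) := by
        funext w
        rcases eq_or_ne w u with rfl | hwu
        · simp [p3, Equiv.swap_apply_left]
        rcases eq_or_ne w v with rfl | hwv
        · simp [p3, Equiv.swap_apply_right, huvne.symm]
        · simp [p3, hwu, hwv, Equiv.swap_apply_of_ne_of_ne hwu hwv]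
      have hvals3 : valsNR n p3 = valsNR n p := by
        rw [hp3perm, valsNR_comp_perm p'' (Equiv.swap u v) (by
          rw [Equiv.swap_apply_of_ne_of_ne (Ne.symm hu0) (Ne.symm hv0)]), hvals]
      have hagree3 : ∀ w : Fin (n+1), w ≠ 0 → m < (w : ℕ) → p3 w = p w := by
        intro w hw0 hwm
        rcases eq_or_ne w v with rfl | hwv
        · simp only [p3, if_neg huvne.symm, if_pos rfl]
          exact hu_eq
        · have hwgt : m + 1 < (w : ℕ) := by
            rcases Nat.lt_or_ge (m+1) (w : ℕ) with h | h
            · exact h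
            · exact absurd (Fin.ext (by omega) : w = v) hwv
          have hule : (u : ℕ) ≤ (v : ℕ) := huv_le
          have hwu : w ≠ u := by
            intro h
            have : (w : ℕ) = (u : ℕ) := by rw [h]
            omega
          simp only [p3, if_neg hwu, if_neg hwv]
          exact hagree w hw0 (by omega)
      calc maxp n (fun _ => 0) c p B ≤ maxp n (fun _ => 0) c p3 B := ih p3 hvals3 hagree3
        _ ≤ maxp n (fun _ => 0) c p'' B := by
            refine maxp_swap_le c p'' B hB hu0 hv0 huvne (hcinc u v hu0 huv_le) ?_
            rw [hu_eq]
            exact hppv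

end Star8

/-- On a star rooted at its center, assigning the prizes in increasing order
matched with the costs in increasing order is an optimal security system. -/
theorem stmt8 (n : ℕ) (c p : Fin (n+1) → ℚ)
    (hc : ∀ v, 0 ≤ c v) (hp : ∀ v, 0 ≤ p v)
    (hcinc : ∀ v w : Fin (n+1), v ≠ 0 → v ≤ w → c v ≤ c w)
    (hpinc : ∀ v w : Fin (n+1), v ≠ 0 → v ≤ w → p v ≤ p w) :
    ∀ B : ℚ, 0 ≤ B → ∀ c' p' : Fin (n+1) → ℚ,
      valsNR n c' = valsNR n c → valsNR n p' = valsNR n p →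
      maxp n (fun _ => 0) c p B ≤ maxp n (fun _ => 0) c' p' B := by
  intro B hB c' p' hc' hp'
  classical
  open Star8 in
  set g : Fin n → ℚ := fun i => c' i.succ with hg
  set σ : Equiv.Perm (Fin n) := Tuple.sort g with hσ
  set ρ : Equiv.Perm (Fin (n+1)) := Equiv.Perm.decomposeFin.symm (0, σ) with hρdef
  have hρ0 : ρ 0 = 0 := Equiv.Perm.decomposeFin_symm_apply_zero 0 σ
  have hρsucc : ∀ i : Fin n, ρ i.succ = (σ i).succ := by
    intro i
    rw [hρdef, Equiv.Perm.decomposeFin_symm_apply_succ]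
    simp
  have hvc : valsNR n (c' ∘ ρ) = valsNR n c := by
    rw [Star8.valsNR_comp_perm c' ρ hρ0, hc']
  have hvp : valsNR n (p' ∘ ρ) = valsNR n p := by
    rw [Star8.valsNR_comp_perm p' ρ hρ0, hp']
  have hcsort : ∀ v w : Fin (n+1), v ≠ 0 → v ≤ w → (c' ∘ ρ) v ≤ (c' ∘ ρ) w := by
    intro v w hv hvw
    have hw : w ≠ 0 := by
      intro h
      exact hv (le_antisymm (h ▸ hvw) (Fin.zero_le v))
    obtain ⟨i, hi⟩ := Fin.exists_succ_eq.2 hv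
    obtain ⟨j, hj⟩ := Fin.exists_succ_eq.2 hw
    have hij : i ≤ j := by
      rw [← hi, ← hj] at hvw
      exact Fin.succ_le_succ_iff.1 hvw
    have hmono : Monotone (g ∘ σ) := Tuple.monotone_sort g
    have h := hmono hij
    rw [← hi, ← hj]
    simpa [hρsucc, Function.comp, g] using h
  have hceq : ∀ v : Fin (n+1), v ≠ 0 → (c' ∘ ρ) v = c v :=
    Star8.eq_of_sorted hcsort hcinc hvc
  calc maxp n (fun _ => 0) c p B
      ≤ maxp n (fun _ => 0) c (p' ∘ ρ) B :=
        Star8.key_step c p hcinc hpinc B hB n (p' ∘ ρ) hvp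
          (fun w _ hnw => absurd w.isLt (by omega))
    _ = maxp n (fun _ => 0) (c' ∘ ρ) (p' ∘ ρ) B :=
        Star8.maxp_congr hB (fun v hv => (hceq v hv).symm) (fun _ _ => rfl)
    _ = maxp n (fun _ => 0) c' p' B := Star8.maxp_comp_perm c' p' B hB ρ hρ0
end

section
/- Let T be a rooted 4-spider: root r with children u₁,…,u_k, where each uᵢ for i ∈ {1,…,n−k} has exactly one child u_{k+i} (and n/2 ≤ k ≤ n−2). Let P = {p₁ ≤ ⋯ ≤ pₙ}. Then in the P-model (T, I, P), the security system with p(uᵢ) = pᵢ for i ∈ {1,…,k} and p(uᵢ) = p_{n+k+1−i} for i ∈ {k+1,…,n} (smallest prizes on level one in increasing order, largest prizes on the leaves in decreasing order so the largest leaf-prize hangs below the smallest level-one prize) is optimal: for every integer budget m and every bijective prize assignment p', maxp(m,𝟙,p) ≤ maxp(m,𝟙,p'). -/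
/-- Parent function of the rooted 4-spider: the root `0` has children
`u₁, …, uₖ`, and `u_{k+i}` is the unique child of `uᵢ` for `i ∈ {1,…,n-k}`. -/
def spiderPar (n k : ℕ) : Fin (n+1) → Fin (n+1) :=
  fun v => if h : v.val ≤ k then 0 else ⟨v.val - k, by have := v.isLt; omega⟩

/-- The prize assignment on the rooted 4-spider built from the increasingly
sorted prizes `pr`: `p uᵢ = prᵢ` for `i ≤ k` and `p uᵢ = pr_{n+k+1-i}` for
`i ∈ {k+1,…,n}`. -/
def spiderPrize (n k : ℕ) (pr : Fin (n+1) → ℚ) : Fin (n+1) → ℚ :=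
  fun v => if h : v.val ≤ k then pr v
    else pr ⟨n + k + 1 - v.val, by have := v.isLt; omega⟩

namespace S14

open Finset

variable {n k : ℕ}

abbrev NRs (n : ℕ) : Finset (Fin (n+1)) :=
  Finset.univ.filter (fun v : Fin (n+1) => v ≠ 0)

lemma mem_NRs {v : Fin (n+1)} : v ∈ NRs n ↔ v ≠ 0 := by simp [NRs]

lemma ne0 {v : Fin (n+1)} (h : 1 ≤ v.val) : v ≠ 0 := by
  intro h0; rw [h0] at h; simp at h

lemma val_le (v : Fin (n+1)) : v.val ≤ n := Nat.lt_succ_iff.1 v.isLt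

/-! ### spiderPar facts -/

lemma par_zero {v : Fin (n+1)} (h : v.val ≤ k) : spiderPar n k v = 0 := dif_pos h

lemma par_eq {v u : Fin (n+1)} (h : k < v.val) (hu : u.val = v.val - k) :
    spiderPar n k v = u := by
  simp only [spiderPar, dif_neg (by omega : ¬ v.val ≤ k)]
  exact Fin.ext (by simp [hu])

lemma par_val_le (hnk : n ≤ 2*k) (v : Fin (n+1)) : (spiderPar n k v).val ≤ k := by
  by_cases h : v.val ≤ k
  · rw [par_zero h]; simp
  · simp only [spiderPar, dif_neg h]
    exact show v.val - k ≤ k by have := val_le v; omega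

lemma par_mem_cases {v u : Fin (n+1)} (h : spiderPar n k v = u) (hu : u ≠ 0) :
    k < v.val ∧ v.val = k + u.val := by
  by_cases hv : v.val ≤ k
  · rw [par_zero hv] at h; exact absurd h.symm hu
  · have hval : u.val = v.val - k := by
      subst h; simp [spiderPar, hv]
    exact ⟨by omega, by omega⟩

/-! ### maxp basic lemmas -/

lemma le_unbot'_of_mem {s : Finset ℚ} {a : ℚ} (h : a ∈ s) : a ≤ s.max.unbotD 0 := by
  obtain ⟨b, hb⟩ := Finset.max_of_mem h
  have h2 := Finset.le_max h
  rw [hb] at h2 ⊢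
  simpa using h2

lemma unbot'_le {s : Finset ℚ} {t : ℚ} (ht : 0 ≤ t) (h : ∀ a ∈ s, a ≤ t) :
    s.max.unbotD 0 ≤ t := by
  rcases hmax : s.max with _ | b
  · exact ht
  · exact h b (Finset.mem_of_max hmax)

lemma sum_le_maxp (par : Fin (n+1) → Fin (n+1)) (p : Fin (n+1) → ℚ) (B : ℚ)
    (A : Finset (Fin (n+1))) (h1 : A ⊆ NRs n)
    (h2 : ∀ v ∈ A, par v = 0 ∨ par v ∈ A) (h3 : (A.card : ℚ) ≤ B) :
    (∑ v ∈ A, p v) ≤ maxp n par (fun _ => 1) p B := by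
  unfold maxp
  apply le_unbot'_of_mem
  refine Finset.mem_image.2 ⟨A, Finset.mem_filter.2 ⟨Finset.mem_powerset.2 h1, h2, ?_⟩, rfl⟩
  simpa using h3

lemma maxp_le (par : Fin (n+1) → Fin (n+1)) (p : Fin (n+1) → ℚ) (B : ℚ) (t : ℚ)
    (ht : 0 ≤ t)
    (h : ∀ A : Finset (Fin (n+1)), A ⊆ NRs n → (∀ v ∈ A, par v = 0 ∨ par v ∈ A) →
      (A.card : ℚ) ≤ B → (∑ v ∈ A, p v) ≤ t) :
    maxp n par (fun _ => 1) p B ≤ t := by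
  unfold maxp
  apply unbot'_le ht
  intro a ha
  obtain ⟨A, hA, rfl⟩ := Finset.mem_image.1 ha
  obtain ⟨hpow, hcl, hcost⟩ := Finset.mem_filter.1 hA
  exact h A (Finset.mem_powerset.1 hpow) hcl (by simpa using hcost)

lemma maxp_nonneg (par : Fin (n+1) → Fin (n+1)) (p : Fin (n+1) → ℚ) (B : ℚ)
    (hB : 0 ≤ B) : 0 ≤ maxp n par (fun _ => 1) p B := by
  have := sum_le_maxp par p B ∅ (by simp) (by simp) (by simpa using hB)
  simpa using this

lemma maxp_congr (par : Fin (n+1) → Fin (n+1)) (c : Fin (n+1) → ℚ)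
    (p₁ p₂ : Fin (n+1) → ℚ) (B : ℚ) (h : ∀ v : Fin (n+1), v ≠ 0 → p₁ v = p₂ v) :
    maxp n par c p₁ B = maxp n par c p₂ B := by
  unfold maxp
  have himg : ∀ (S : Finset (Finset (Fin (n+1)))),
      (∀ A ∈ S, A ⊆ NRs n) →
      S.image (fun A => ∑ v ∈ A, p₁ v) = S.image (fun A => ∑ v ∈ A, p₂ v) := by
    intro S hS
    apply Finset.image_congr
    intro A hA
    exact Finset.sum_congr rfl fun v hv => h v (mem_NRs.1 (hS A hA hv))
  rw [himg _ (fun A hA => Finset.mem_powerset.1 (Finset.mem_filter.1 hA).1)]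
/-! ### sum and image helpers for swaps -/

lemma swap_mem_of_both {A : Finset (Fin (n+1))} {x y v : Fin (n+1)}
    (hx : x ∈ A) (hy : y ∈ A) (hv : v ∈ A) : Equiv.swap x y v ∈ A := by
  rcases eq_or_ne v x with rfl | hvx
  · rwa [Equiv.swap_apply_left]
  rcases eq_or_ne v y with rfl | hvy
  · rwa [Equiv.swap_apply_right]
  · rwa [Equiv.swap_apply_of_ne_of_ne hvx hvy]

lemma sum_swap_both (p : Fin (n+1) → ℚ) {A : Finset (Fin (n+1))} {x y : Fin (n+1)}
    (hx : x ∈ A) (hy : y ∈ A) :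
    ∑ v ∈ A, p (Equiv.swap x y v) = ∑ v ∈ A, p v := by
  apply Finset.sum_equiv (Equiv.swap x y)
  · intro i
    constructor
    · intro hi; exact swap_mem_of_both hx hy hi
    · intro hi
      have h2 := swap_mem_of_both hx hy hi
      rwa [Equiv.swap_apply_self] at h2
  · intro i _; rfl

lemma sum_swap_none (p : Fin (n+1) → ℚ) {A : Finset (Fin (n+1))} {x y : Fin (n+1)}
    (hx : x ∉ A) (hy : y ∉ A) :
    ∑ v ∈ A, p (Equiv.swap x y v) = ∑ v ∈ A, p v :=
  Finset.sum_congr rfl fun v hv => by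
    rw [Equiv.swap_apply_of_ne_of_ne (ne_of_mem_of_not_mem hv hx)
      (ne_of_mem_of_not_mem hv hy)]

lemma sum_swap_one (p : Fin (n+1) → ℚ) {A : Finset (Fin (n+1))} {x y : Fin (n+1)}
    (hx : x ∈ A) (hy : y ∉ A) :
    ∑ v ∈ A, p (Equiv.swap x y v) = ∑ v ∈ A, p v - p x + p y := by
  rw [← Finset.sum_erase_add A _ hx, ← Finset.sum_erase_add A p hx]
  have h1 : ∑ v ∈ A.erase x, p (Equiv.swap x y v) = ∑ v ∈ A.erase x, p v :=
    sum_swap_none p (Finset.notMem_erase x A)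
      (fun hy' => hy (Finset.mem_of_mem_erase hy'))
  rw [h1, Equiv.swap_apply_left]
  ring

lemma sum_image_perm (e : Equiv.Perm (Fin (n+1))) (p : Fin (n+1) → ℚ)
    (A : Finset (Fin (n+1))) :
    ∑ v ∈ A.image (fun v => e v), p v = ∑ v ∈ A, p (e v) :=
  Finset.sum_image (fun a _ b _ h => e.injective h)

lemma card_image_perm (e : Equiv.Perm (Fin (n+1))) (A : Finset (Fin (n+1))) :
    (A.image (fun v => e v)).card = A.card :=
  Finset.card_image_of_injective _ e.injective

lemma image_perm_subset (e : Equiv.Perm (Fin (n+1))) (he : e 0 = 0)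
    {A : Finset (Fin (n+1))} (hA : A ⊆ NRs n) :
    A.image (fun v => e v) ⊆ NRs n := by
  intro v hv
  obtain ⟨w, hw, rfl⟩ := Finset.mem_image.1 hv
  rw [mem_NRs]
  intro h0
  have hw0 : w = 0 := e.injective (by rw [h0, he])
  exact (mem_NRs.1 (hA hw)) hw0

lemma swap_zero {x y : Fin (n+1)} (hx : x ≠ 0) (hy : y ≠ 0) :
    Equiv.swap x y 0 = 0 :=
  Equiv.swap_apply_of_ne_of_ne (Ne.symm hx) (Ne.symm hy)

lemma mem_image_perm {e : Equiv.Perm (Fin (n+1))} {A : Finset (Fin (n+1))}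
    {v : Fin (n+1)} (hv : v ∈ A) : e v ∈ A.image (fun v => e v) :=
  Finset.mem_image_of_mem _ hv
/-! ### Swap lemma A: level-one vertex vs leaf -/

lemma swapA (hnk : n ≤ 2*k) (p' : Fin (n+1) → ℚ) (B : ℚ) (hB : 0 ≤ B)
    (u l : Fin (n+1)) (hu1 : 1 ≤ u.val) (hu2 : u.val ≤ k) (hl : k < l.val)
    (hval : p' l ≤ p' u) :
    maxp n (spiderPar n k) (fun _ => 1) (fun v => p' (Equiv.swap u l v)) B ≤
      maxp n (spiderPar n k) (fun _ => 1) p' B := by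
  apply maxp_le _ _ _ _ (maxp_nonneg _ _ _ hB)
  intro A hsub hcl hcard
  by_cases hlA : l ∈ A
  · by_cases huA : u ∈ A
    · rw [sum_swap_both p' huA hlA]
      exact sum_le_maxp _ _ _ A hsub hcl hcard
    · -- l ∈ A, u ∉ A : replace l by u
      rw [← sum_image_perm (Equiv.swap u l) p' A]
      apply sum_le_maxp _ _ _ _
        (image_perm_subset _ (swap_zero (ne0 hu1) (ne0 (by omega))) hsub)
      · intro v' hv'
        obtain ⟨v, hv, rfl⟩ := Finset.mem_image.1 hv'
        rcases eq_or_ne v l with rfl | hvl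
        · left; rw [Equiv.swap_apply_right]; exact par_zero hu2
        · have hvu : v ≠ u := fun h => huA (h ▸ hv)
          rw [Equiv.swap_apply_of_ne_of_ne hvu hvl]
          rcases hcl v hv with h0 | hpar
          · exact Or.inl h0
          · right
            have hpu : spiderPar n k v ≠ u := fun h => huA (h ▸ hpar)
            have hpl : spiderPar n k v ≠ l := by
              intro h
              have h2 := par_val_le hnk v
              rw [h] at h2; omega
            rw [← Equiv.swap_apply_of_ne_of_ne hpu hpl]
            exact mem_image_perm hpar
      · rw [card_image_perm]; exact hcard
  · by_cases huA : u ∈ A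
    · -- u ∈ A, l ∉ A : value decreases
      rw [sum_swap_one p' huA hlA]
      have h2 := sum_le_maxp _ p' B A hsub hcl hcard
      linarith
    · rw [sum_swap_none p' huA hlA]
      exact sum_le_maxp _ _ _ A hsub hcl hcard
/-! ### Swap lemma BE: two level-one vertices, the higher-indexed one childless -/

lemma swapBE (hnk : n ≤ 2*k) (p' : Fin (n+1) → ℚ) (B : ℚ) (hB : 0 ≤ B)
    (u w : Fin (n+1)) (hu1 : 1 ≤ u.val) (huw : u.val < w.val)
    (hw1 : n - k < w.val) (hw2 : w.val ≤ k)
    (hval : p' w ≤ p' u) :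
    maxp n (spiderPar n k) (fun _ => 1) (fun v => p' (Equiv.swap u w v)) B ≤
      maxp n (spiderPar n k) (fun _ => 1) p' B := by
  have hu0 : u ≠ 0 := ne0 hu1
  have hw0 : w ≠ 0 := ne0 (by omega)
  -- no vertex has parent w
  have hwnopar : ∀ v : Fin (n+1), spiderPar n k v ≠ w := by
    intro v h
    obtain ⟨h1, h2⟩ := par_mem_cases h hw0
    have := val_le v
    omega
  apply maxp_le _ _ _ _ (maxp_nonneg _ _ _ hB)
  intro A hsub hcl hcard
  by_cases huA : u ∈ A
  · by_cases hwA : w ∈ A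
    · rw [sum_swap_both p' huA hwA]
      exact sum_le_maxp _ _ _ A hsub hcl hcard
    · by_cases hchild : ∃ v ∈ A, spiderPar n k v = u
      · rw [sum_swap_one p' huA hwA]
        have h2 := sum_le_maxp _ p' B A hsub hcl hcard
        linarith
      · push_neg at hchild
        rw [← sum_image_perm (Equiv.swap u w) p' A]
        apply sum_le_maxp _ _ _ _ (image_perm_subset _ (swap_zero hu0 hw0) hsub)
        · intro v' hv'
          obtain ⟨v, hv, rfl⟩ := Finset.mem_image.1 hv'
          rcases eq_or_ne v u with rfl | hvu
          · left; rw [Equiv.swap_apply_left]; exact par_zero hw2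
          · have hvw : v ≠ w := fun h => hwA (h ▸ hv)
            rw [Equiv.swap_apply_of_ne_of_ne hvu hvw]
            rcases hcl v hv with h0 | hpar
            · exact Or.inl h0
            · right
              have hpu : spiderPar n k v ≠ u := hchild v hv
              have hpw : spiderPar n k v ≠ w := hwnopar v
              rw [← Equiv.swap_apply_of_ne_of_ne hpu hpw]
              exact mem_image_perm hpar
        · rw [card_image_perm]; exact hcard
  · by_cases hwA : w ∈ A
    · -- w ∈ A, u ∉ A: swap memberships
      have hnochild : ∀ v ∈ A, spiderPar n k v ≠ u := by
        intro v hv h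
        rcases hcl v hv with h0 | hpar
        · rw [h] at h0; exact hu0 h0
        · rw [h] at hpar; exact huA hpar
      rw [← sum_image_perm (Equiv.swap u w) p' A]
      apply sum_le_maxp _ _ _ _ (image_perm_subset _ (swap_zero hu0 hw0) hsub)
      · intro v' hv'
        obtain ⟨v, hv, rfl⟩ := Finset.mem_image.1 hv'
        rcases eq_or_ne v w with rfl | hvw
        · left; rw [Equiv.swap_apply_right]; exact par_zero (by omega)
        · have hvu : v ≠ u := fun h => huA (h ▸ hv)
          rw [Equiv.swap_apply_of_ne_of_ne hvu hvw]
          rcases hcl v hv with h0 | hpar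
          · exact Or.inl h0
          · right
            have hpu : spiderPar n k v ≠ u := hnochild v hv
            have hpw : spiderPar n k v ≠ w := hwnopar v
            rw [← Equiv.swap_apply_of_ne_of_ne hpu hpw]
            exact mem_image_perm hpar
      · rw [card_image_perm]; exact hcard
    · rw [sum_swap_none p' huA hwA]
      exact sum_le_maxp _ _ _ A hsub hcl hcard
/-! ### Swap lemma GP: two branch parents (with leaf condition) -/

lemma swapGP (hnk : n ≤ 2*k) (p' : Fin (n+1) → ℚ) (B : ℚ) (hB : 0 ≤ B)
    (u w lu lw : Fin (n+1)) (hu1 : 1 ≤ u.val) (huw : u.val < w.val)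
    (hw : w.val ≤ n - k) (hlu : lu.val = k + u.val) (hlw : lw.val = k + w.val)
    (hval : p' w ≤ p' u) (hleaf : p' lw ≤ p' lu) :
    maxp n (spiderPar n k) (fun _ => 1) (fun v => p' (Equiv.swap u w v)) B ≤
      maxp n (spiderPar n k) (fun _ => 1) p' B := by
  have hu0 : u ≠ 0 := ne0 hu1
  have hw0 : w ≠ 0 := ne0 (by omega)
  have huk : u.val ≤ k := by omega
  have hwk : w.val ≤ k := by omega
  have hparlu : spiderPar n k lu = u := par_eq (by omega) (by omega)
  have hparlw : spiderPar n k lw = w := par_eq (by omega) (by omega)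
  have hchildu : ∀ v : Fin (n+1), spiderPar n k v = u → v = lu := by
    intro v h
    have h2 := (par_mem_cases h hu0).2
    exact Fin.ext (by omega)
  have hchildw : ∀ v : Fin (n+1), spiderPar n k v = w → v = lw := by
    intro v h
    have h2 := (par_mem_cases h hw0).2
    exact Fin.ext (by omega)
  apply maxp_le _ _ _ _ (maxp_nonneg _ _ _ hB)
  intro A hsub hcl hcard
  by_cases hluA : lu ∈ A
  · -- then u ∈ A
    have huA : u ∈ A := by
      rcases hcl lu hluA with h0 | hp
      · rw [hparlu] at h0; exact absurd h0 hu0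
      · rwa [hparlu] at hp
    by_cases hwA : w ∈ A
    · rw [sum_swap_both p' huA hwA]
      exact sum_le_maxp _ _ _ A hsub hcl hcard
    · rw [sum_swap_one p' huA hwA]
      have h2 := sum_le_maxp _ p' B A hsub hcl hcard
      linarith
  · by_cases hlwA : lw ∈ A
    · have hwA : w ∈ A := by
        rcases hcl lw hlwA with h0 | hp
        · rw [hparlw] at h0; exact absurd h0 hw0
        · rwa [hparlw] at hp
      by_cases huA : u ∈ A
      · rw [sum_swap_both p' huA hwA]
        exact sum_le_maxp _ _ _ A hsub hcl hcard
      · -- w ∈ A, lw ∈ A, u ∉ A, lu ∉ A : swap whole branches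
        set e : Equiv.Perm (Fin (n+1)) := (Equiv.swap lu lw).trans (Equiv.swap u w) with he
        have hulu : u ≠ lu := by intro h; rw [h] at huk; omega
        have hulw : u ≠ lw := by intro h; rw [h] at huk; omega
        have hwlu : w ≠ lu := by intro h; rw [h] at hwk; omega
        have hwlw : w ≠ lw := by intro h; rw [h] at hwk; omega
        have heu : e w = u := by
          rw [he, Equiv.trans_apply, Equiv.swap_apply_of_ne_of_ne hwlu hwlw,
            Equiv.swap_apply_right]
        have helw : e lw = lu := by
          rw [he, Equiv.trans_apply, Equiv.swap_apply_right,
            Equiv.swap_apply_of_ne_of_ne (Ne.symm hulu) (Ne.symm hwlu)]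
        have hefix : ∀ v : Fin (n+1), v ≠ u → v ≠ w → v ≠ lu → v ≠ lw → e v = v := by
          intro v h1 h2 h3 h4
          rw [he, Equiv.trans_apply, Equiv.swap_apply_of_ne_of_ne h3 h4,
            Equiv.swap_apply_of_ne_of_ne h1 h2]
        have he0 : e 0 = 0 := by
          rw [he, Equiv.trans_apply, swap_zero (ne0 (by omega)) (ne0 (by omega)),
            swap_zero hu0 hw0]
        -- value computation
        have hsum : ∑ v ∈ A.image (fun v => e v), p' v
            = ∑ v ∈ A, p' v - p' w + p' u - p' lw + p' lu := by
          rw [sum_image_perm]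
          have h1 : ∀ v ∈ A, p' (e v) = p' (Equiv.swap u w (Equiv.swap lw lu v)) := by
            intro v _
            rw [he, Equiv.trans_apply, Equiv.swap_comm lw lu]
          rw [Finset.sum_congr rfl h1]
          have step1 : ∑ v ∈ A, p' (Equiv.swap u w (Equiv.swap lw lu v))
              = (∑ v ∈ A, p' (Equiv.swap u w v)) - p' (Equiv.swap u w lw)
                + p' (Equiv.swap u w lu) :=
            sum_swap_one (fun x => p' (Equiv.swap u w x)) hlwA hluA
          rw [step1,
            Equiv.swap_apply_of_ne_of_ne (Ne.symm hulw) (Ne.symm hwlw),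
            Equiv.swap_apply_of_ne_of_ne (Ne.symm hulu) (Ne.symm hwlu),
            Equiv.swap_comm u w, sum_swap_one p' hwA huA]
        have hlhs : ∑ v ∈ A, p' (Equiv.swap u w v) = ∑ v ∈ A, p' v - p' w + p' u := by
          rw [Equiv.swap_comm u w, sum_swap_one p' hwA huA]
        rw [hlhs]
        have hle : ∑ v ∈ A, p' v - p' w + p' u ≤ ∑ v ∈ A.image (fun v => e v), p' v := by
          rw [hsum]; linarith
        apply hle.trans
        apply sum_le_maxp _ _ _ _ (image_perm_subset _ he0 hsub)
        · intro v' hv'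
          obtain ⟨v, hv, rfl⟩ := Finset.mem_image.1 hv'
          have hvu : v ≠ u := fun h => huA (h ▸ hv)
          have hvlu : v ≠ lu := fun h => hluA (h ▸ hv)
          rcases eq_or_ne v w with rfl | hvw
          · left; rw [heu]; exact par_zero huk
          rcases eq_or_ne v lw with rfl | hvlw
          · rw [helw, hparlu]
            right
            rw [← heu]
            exact mem_image_perm hwA
          · rw [hefix v hvu hvw hvlu hvlw]
            rcases hcl v hv with h0 | hpar
            · exact Or.inl h0
            · right
              have hp1 : spiderPar n k v ≠ u := fun h => hvlu (hchildu v h)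
              have hp2 : spiderPar n k v ≠ w := fun h => hvlw (hchildw v h)
              have hp3 : spiderPar n k v ≠ lu := by
                intro h; have h2 := par_val_le hnk v; rw [h] at h2; omega
              have hp4 : spiderPar n k v ≠ lw := by
                intro h; have h2 := par_val_le hnk v; rw [h] at h2; omega
              rw [← hefix _ hp1 hp2 hp3 hp4]
              exact mem_image_perm hpar
        · rw [card_image_perm]; exact hcard
    · -- neither leaf in A
      by_cases huA : u ∈ A
      · by_cases hwA : w ∈ A
        · rw [sum_swap_both p' huA hwA]
          exact sum_le_maxp _ _ _ A hsub hcl hcard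
        · rw [sum_swap_one p' huA hwA]
          have h2 := sum_le_maxp _ p' B A hsub hcl hcard
          linarith
      · by_cases hwA : w ∈ A
        · -- w ∈ A, u ∉ A, no leaves: exact image
          rw [← sum_image_perm (Equiv.swap u w) p' A]
          apply sum_le_maxp _ _ _ _ (image_perm_subset _ (swap_zero hu0 hw0) hsub)
          · intro v' hv'
            obtain ⟨v, hv, rfl⟩ := Finset.mem_image.1 hv'
            rcases eq_or_ne v w with rfl | hvw
            · left; rw [Equiv.swap_apply_right]; exact par_zero huk
            · have hvu : v ≠ u := fun h => huA (h ▸ hv)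
              rw [Equiv.swap_apply_of_ne_of_ne hvu hvw]
              rcases hcl v hv with h0 | hpar
              · exact Or.inl h0
              · right
                have hp1 : spiderPar n k v ≠ u := by
                  intro h; exact hluA ((hchildu v h) ▸ hv)
                have hp2 : spiderPar n k v ≠ w := by
                  intro h; exact hlwA ((hchildw v h) ▸ hv)
                rw [← Equiv.swap_apply_of_ne_of_ne hp1 hp2]
                exact mem_image_perm hpar
          · rw [card_image_perm]; exact hcard
        · rw [sum_swap_none p' huA hwA]
          exact sum_le_maxp _ _ _ A hsub hcl hcard
/-! ### Swap lemma LF: two leaves (with parent condition) -/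

lemma swapLF (hnk : n ≤ 2*k) (p' : Fin (n+1) → ℚ) (B : ℚ) (hB : 0 ≤ B)
    (u w lu lw : Fin (n+1)) (hu1 : 1 ≤ u.val) (huw : u.val < w.val)
    (hw : w.val ≤ n - k) (hlu : lu.val = k + u.val) (hlw : lw.val = k + w.val)
    (hpar : p' u ≤ p' w) (hval : p' lu ≤ p' lw) :
    maxp n (spiderPar n k) (fun _ => 1) (fun v => p' (Equiv.swap lu lw v)) B ≤
      maxp n (spiderPar n k) (fun _ => 1) p' B := by
  have hu0 : u ≠ 0 := ne0 hu1
  have hw0 : w ≠ 0 := ne0 (by omega)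
  have huk : u.val ≤ k := by omega
  have hwk : w.val ≤ k := by omega
  have hlu0 : lu ≠ 0 := ne0 (by omega)
  have hlw0 : lw ≠ 0 := ne0 (by omega)
  have hparlu : spiderPar n k lu = u := par_eq (by omega) (by omega)
  have hparlw : spiderPar n k lw = w := par_eq (by omega) (by omega)
  have hchildu : ∀ v : Fin (n+1), spiderPar n k v = u → v = lu := by
    intro v h
    have h2 := (par_mem_cases h hu0).2
    exact Fin.ext (by omega)
  have hchildw : ∀ v : Fin (n+1), spiderPar n k v = w → v = lw := by
    intro v h
    have h2 := (par_mem_cases h hw0).2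
    exact Fin.ext (by omega)
  have hulu : u ≠ lu := by intro h; rw [h] at huk; omega
  have hulw : u ≠ lw := by intro h; rw [h] at huk; omega
  have hwlu : w ≠ lu := by intro h; rw [h] at hwk; omega
  have hwlw : w ≠ lw := by intro h; rw [h] at hwk; omega
  apply maxp_le _ _ _ _ (maxp_nonneg _ _ _ hB)
  intro A hsub hcl hcard
  by_cases hluA : lu ∈ A
  · have huA : u ∈ A := by
      rcases hcl lu hluA with h0 | hp
      · rw [hparlu] at h0; exact absurd h0 hu0
      · rwa [hparlu] at hp
    by_cases hlwA : lw ∈ A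
    · rw [sum_swap_both p' hluA hlwA]
      exact sum_le_maxp _ _ _ A hsub hcl hcard
    · by_cases hwA : w ∈ A
      · -- simple leaf replacement
        rw [← sum_image_perm (Equiv.swap lu lw) p' A]
        apply sum_le_maxp _ _ _ _ (image_perm_subset _ (swap_zero hlu0 hlw0) hsub)
        · intro v' hv'
          obtain ⟨v, hv, rfl⟩ := Finset.mem_image.1 hv'
          rcases eq_or_ne v lu with rfl | hvlu
          · rw [Equiv.swap_apply_left, hparlw]
            right
            rw [← Equiv.swap_apply_of_ne_of_ne hwlu hwlw]
            exact mem_image_perm hwA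
          · have hvlw : v ≠ lw := fun h => hlwA (h ▸ hv)
            rw [Equiv.swap_apply_of_ne_of_ne hvlu hvlw]
            rcases hcl v hv with h0 | hpar2
            · exact Or.inl h0
            · right
              have hp3 : spiderPar n k v ≠ lu := by
                intro h; have h2 := par_val_le hnk v; rw [h] at h2; omega
              have hp4 : spiderPar n k v ≠ lw := by
                intro h; have h2 := par_val_le hnk v; rw [h] at h2; omega
              rw [← Equiv.swap_apply_of_ne_of_ne hp3 hp4]
              exact mem_image_perm hpar2
        · rw [card_image_perm]; exact hcard
      · -- move whole branch: lu,u ∈ A; lw,w ∉ A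
        set e : Equiv.Perm (Fin (n+1)) := (Equiv.swap lu lw).trans (Equiv.swap u w) with he
        have heu : e u = w := by
          rw [he, Equiv.trans_apply, Equiv.swap_apply_of_ne_of_ne hulu hulw,
            Equiv.swap_apply_left]
        have helu : e lu = lw := by
          rw [he, Equiv.trans_apply, Equiv.swap_apply_left,
            Equiv.swap_apply_of_ne_of_ne (Ne.symm hulw) (Ne.symm hwlw)]
        have hefix : ∀ v : Fin (n+1), v ≠ u → v ≠ w → v ≠ lu → v ≠ lw → e v = v := by
          intro v h1 h2 h3 h4
          rw [he, Equiv.trans_apply, Equiv.swap_apply_of_ne_of_ne h3 h4,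
            Equiv.swap_apply_of_ne_of_ne h1 h2]
        have he0 : e 0 = 0 := by
          rw [he, Equiv.trans_apply, swap_zero hlu0 hlw0, swap_zero hu0 hw0]
        have hsum : ∑ v ∈ A.image (fun v => e v), p' v
            = ∑ v ∈ A, p' v - p' u + p' w - p' lu + p' lw := by
          rw [sum_image_perm]
          have h1 : ∀ v ∈ A, p' (e v) = p' (Equiv.swap u w (Equiv.swap lu lw v)) := by
            intro v _
            rw [he, Equiv.trans_apply]
          rw [Finset.sum_congr rfl h1]
          have step1 : ∑ v ∈ A, p' (Equiv.swap u w (Equiv.swap lu lw v))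
              = (∑ v ∈ A, p' (Equiv.swap u w v)) - p' (Equiv.swap u w lu)
                + p' (Equiv.swap u w lw) :=
            sum_swap_one (fun x => p' (Equiv.swap u w x)) hluA hlwA
          rw [step1,
            Equiv.swap_apply_of_ne_of_ne (Ne.symm hulu) (Ne.symm hwlu),
            Equiv.swap_apply_of_ne_of_ne (Ne.symm hulw) (Ne.symm hwlw),
            sum_swap_one p' huA hwA]
        have hlhs : ∑ v ∈ A, p' (Equiv.swap lu lw v)
            = ∑ v ∈ A, p' v - p' lu + p' lw := sum_swap_one p' hluA hlwA
        rw [hlhs]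
        have hle : ∑ v ∈ A, p' v - p' lu + p' lw
            ≤ ∑ v ∈ A.image (fun v => e v), p' v := by
          rw [hsum]; linarith
        apply hle.trans
        apply sum_le_maxp _ _ _ _ (image_perm_subset _ he0 hsub)
        · intro v' hv'
          obtain ⟨v, hv, rfl⟩ := Finset.mem_image.1 hv'
          have hvw : v ≠ w := fun h => hwA (h ▸ hv)
          have hvlw : v ≠ lw := fun h => hlwA (h ▸ hv)
          rcases eq_or_ne v u with rfl | hvu
          · left; rw [heu]; exact par_zero hwk
          rcases eq_or_ne v lu with rfl | hvlu
          · rw [helu, hparlw]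
            right
            rw [← heu]
            exact mem_image_perm huA
          · rw [hefix v hvu hvw hvlu hvlw]
            rcases hcl v hv with h0 | hpar2
            · exact Or.inl h0
            · right
              have hp1 : spiderPar n k v ≠ u := fun h => hvlu (hchildu v h)
              have hp2 : spiderPar n k v ≠ w := fun h => hvlw (hchildw v h)
              have hp3 : spiderPar n k v ≠ lu := by
                intro h; have h2 := par_val_le hnk v; rw [h] at h2; omega
              have hp4 : spiderPar n k v ≠ lw := by
                intro h; have h2 := par_val_le hnk v; rw [h] at h2; omega
              rw [← hefix _ hp1 hp2 hp3 hp4]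
              exact mem_image_perm hpar2
        · rw [card_image_perm]; exact hcard
  · by_cases hlwA : lw ∈ A
    · rw [Equiv.swap_comm lu lw, sum_swap_one p' hlwA hluA]
      have h2 := sum_le_maxp _ p' B A hsub hcl hcard
      linarith
    · rw [sum_swap_none p' hluA hlwA]
      exact sum_le_maxp _ _ _ A hsub hcl hcard

/-! ### Swap lemma BR: exchanging two whole branches -/

lemma swapBR (hnk : n ≤ 2*k) (p' : Fin (n+1) → ℚ) (B : ℚ) (hB : 0 ≤ B)
    (u w lu lw : Fin (n+1)) (hu1 : 1 ≤ u.val) (huw : u.val < w.val)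
    (hw : w.val ≤ n - k) (hlu : lu.val = k + u.val) (hlw : lw.val = k + w.val) :
    maxp n (spiderPar n k) (fun _ => 1)
      (fun v => p' (Equiv.swap u w (Equiv.swap lu lw v))) B ≤
      maxp n (spiderPar n k) (fun _ => 1) p' B := by
  have hu0 : u ≠ 0 := ne0 hu1
  have hw0 : w ≠ 0 := ne0 (by omega)
  have huk : u.val ≤ k := by omega
  have hwk : w.val ≤ k := by omega
  have hlu0 : lu ≠ 0 := ne0 (by omega)
  have hlw0 : lw ≠ 0 := ne0 (by omega)
  have hparlu : spiderPar n k lu = u := par_eq (by omega) (by omega)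
  have hparlw : spiderPar n k lw = w := par_eq (by omega) (by omega)
  have hchildu : ∀ v : Fin (n+1), spiderPar n k v = u → v = lu := by
    intro v h
    have h2 := (par_mem_cases h hu0).2
    exact Fin.ext (by omega)
  have hchildw : ∀ v : Fin (n+1), spiderPar n k v = w → v = lw := by
    intro v h
    have h2 := (par_mem_cases h hw0).2
    exact Fin.ext (by omega)
  have hulu : u ≠ lu := by intro h; rw [h] at huk; omega
  have hulw : u ≠ lw := by intro h; rw [h] at huk; omega
  have hwlu : w ≠ lu := by intro h; rw [h] at hwk; omega
  have hwlw : w ≠ lw := by intro h; rw [h] at hwk; omega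
  set e : Equiv.Perm (Fin (n+1)) := (Equiv.swap lu lw).trans (Equiv.swap u w) with he
  have heu : e u = w := by
    rw [he, Equiv.trans_apply, Equiv.swap_apply_of_ne_of_ne hulu hulw,
      Equiv.swap_apply_left]
  have hew : e w = u := by
    rw [he, Equiv.trans_apply, Equiv.swap_apply_of_ne_of_ne hwlu hwlw,
      Equiv.swap_apply_right]
  have helu : e lu = lw := by
    rw [he, Equiv.trans_apply, Equiv.swap_apply_left,
      Equiv.swap_apply_of_ne_of_ne (Ne.symm hulw) (Ne.symm hwlw)]
  have helw : e lw = lu := by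
    rw [he, Equiv.trans_apply, Equiv.swap_apply_right,
      Equiv.swap_apply_of_ne_of_ne (Ne.symm hulu) (Ne.symm hwlu)]
  have hefix : ∀ v : Fin (n+1), v ≠ u → v ≠ w → v ≠ lu → v ≠ lw → e v = v := by
    intro v h1 h2 h3 h4
    rw [he, Equiv.trans_apply, Equiv.swap_apply_of_ne_of_ne h3 h4,
      Equiv.swap_apply_of_ne_of_ne h1 h2]
  have he0 : e 0 = 0 := by
    rw [he, Equiv.trans_apply, swap_zero hlu0 hlw0, swap_zero hu0 hw0]
  apply maxp_le _ _ _ _ (maxp_nonneg _ _ _ hB)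
  intro A hsub hcl hcard
  have hsum : ∑ v ∈ A, p' (Equiv.swap u w (Equiv.swap lu lw v))
      = ∑ v ∈ A.image (fun v => e v), p' v := by
    rw [sum_image_perm]
    apply Finset.sum_congr rfl
    intro v _
    rw [he, Equiv.trans_apply]
  rw [hsum]
  apply sum_le_maxp _ _ _ _ (image_perm_subset _ he0 hsub)
  · intro v' hv'
    obtain ⟨v, hv, rfl⟩ := Finset.mem_image.1 hv'
    rcases eq_or_ne v u with rfl | hvu
    · left; rw [heu]; exact par_zero hwk
    rcases eq_or_ne v w with rfl | hvw
    · left; rw [hew]; exact par_zero huk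
    rcases eq_or_ne v lu with rfl | hvlu
    · rw [helu, hparlw]
      right
      have huA : u ∈ A := by
        rcases hcl v hv with h0 | hp
        · rw [hparlu] at h0; exact absurd h0 hu0
        · rwa [hparlu] at hp
      rw [← heu]
      exact mem_image_perm huA
    rcases eq_or_ne v lw with rfl | hvlw
    · rw [helw, hparlu]
      right
      have hwA : w ∈ A := by
        rcases hcl v hv with h0 | hp
        · rw [hparlw] at h0; exact absurd h0 hw0
        · rwa [hparlw] at hp
      rw [← hew]
      exact mem_image_perm hwA
    · rw [hefix v hvu hvw hvlu hvlw]
      rcases hcl v hv with h0 | hpar2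
      · exact Or.inl h0
      · right
        have hp1 : spiderPar n k v ≠ u := fun h => hvlu (hchildu v h)
        have hp2 : spiderPar n k v ≠ w := fun h => hvlw (hchildw v h)
        have hp3 : spiderPar n k v ≠ lu := by
          intro h; have h2 := par_val_le hnk v; rw [h] at h2; omega
        have hp4 : spiderPar n k v ≠ lw := by
          intro h; have h2 := par_val_le hnk v; rw [h] at h2; omega
        rw [← hefix _ hp1 hp2 hp3 hp4]
        exact mem_image_perm hpar2
  · rw [card_image_perm]; exact hcard
/-! ### The rank function and the potential Φ -/

def rkf (n k : ℕ) (v : Fin (n+1)) : ℕ :=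
  if v.val ≤ k then v.val else n + k + 1 - v.val

def Phi (n k : ℕ) (p : Fin (n+1) → ℚ) : ℚ :=
  ∑ v ∈ NRs n, (rkf n k v : ℚ) * p v

noncomputable def PhiSet (n k : ℕ) (p : Fin (n+1) → ℚ) : Finset ℚ :=
  Finset.image
    (fun g : Fin (n+1) → Fin (n+1) => ∑ v ∈ NRs n, (rkf n k v : ℚ) * p (g v))
    Finset.univ

lemma Phi_swap (p' : Fin (n+1) → ℚ) {x y : Fin (n+1)} (hx : x ≠ 0) (hy : y ≠ 0)
    (hxy : x ≠ y) :
    Phi n k (fun v => p' (Equiv.swap x y v)) =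
      Phi n k p' + ((rkf n k x : ℚ) - rkf n k y) * (p' y - p' x) := by
  have hxm : x ∈ NRs n := mem_NRs.2 hx
  have hym : y ∈ (NRs n).erase x := Finset.mem_erase.2 ⟨Ne.symm hxy, mem_NRs.2 hy⟩
  have key : ∀ q : Fin (n+1) → ℚ, ∑ v ∈ NRs n, (rkf n k v : ℚ) * q v
      = (∑ v ∈ ((NRs n).erase x).erase y, (rkf n k v : ℚ) * q v)
        + (rkf n k y : ℚ) * q y + (rkf n k x : ℚ) * q x := by
    intro q
    rw [← Finset.sum_erase_add (NRs n) _ hxm, ← Finset.sum_erase_add ((NRs n).erase x) _ hym]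
  unfold Phi
  rw [key (fun v => p' (Equiv.swap x y v)), key p']
  have h1 : ∑ v ∈ ((NRs n).erase x).erase y, (rkf n k v : ℚ) * p' (Equiv.swap x y v)
      = ∑ v ∈ ((NRs n).erase x).erase y, (rkf n k v : ℚ) * p' v := by
    apply Finset.sum_congr rfl
    intro v hv
    have hvy : v ≠ y := Finset.ne_of_mem_erase hv
    have hvx : v ≠ x := Finset.ne_of_mem_erase (Finset.mem_of_mem_erase hv)
    rw [Equiv.swap_apply_of_ne_of_ne hvx hvy]
  rw [h1, Equiv.swap_apply_left, Equiv.swap_apply_right]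
  ring

lemma Phi_mem (p₀ p'' : Fin (n+1) → ℚ) (h : valsNR n p'' = valsNR n p₀) :
    Phi n k p'' ∈ PhiSet n k p₀ := by
  classical
  have hg : ∀ v : Fin (n+1), v ≠ 0 → ∃ w : Fin (n+1), p₀ w = p'' v := by
    intro v hv
    have hmem : p'' v ∈ valsNR n p'' := by
      unfold valsNR
      exact Multiset.mem_map.2 ⟨v, by simp [hv], rfl⟩
    rw [h] at hmem
    unfold valsNR at hmem
    obtain ⟨w, _, he⟩ := Multiset.mem_map.1 hmem
    exact ⟨w, he⟩
  choose g hg2 using hg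
  refine Finset.mem_image.2 ⟨fun v => if hv : v ≠ 0 then g v hv else 0,
    Finset.mem_univ _, ?_⟩
  unfold Phi
  apply Finset.sum_congr rfl
  intro v hv
  have hv0 : v ≠ 0 := mem_NRs.1 hv
  show (rkf n k v : ℚ) * p₀ (if hv : v ≠ 0 then g v hv else 0)
      = (rkf n k v : ℚ) * p'' v
  rw [dif_pos hv0, hg2 v hv0]

lemma mu_lt {S : Finset ℚ} {a b : ℚ} (hb : b ∈ S) (hab : a < b) :
    (S.filter (fun x => b < x)).card < (S.filter (fun x => a < x)).card := by
  apply Finset.card_lt_card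
  constructor
  · intro x hx
    obtain ⟨h1, h2⟩ := Finset.mem_filter.1 hx
    exact Finset.mem_filter.2 ⟨h1, lt_trans hab h2⟩
  · intro hsup
    have hb2 : b ∈ S.filter (fun x => a < x) := Finset.mem_filter.2 ⟨hb, hab⟩
    have := Finset.mem_filter.1 (hsup hb2)
    exact absurd this.2 (lt_irrefl b)

lemma valsNR_swap (p' : Fin (n+1) → ℚ) {x y : Fin (n+1)} (hx : x ≠ 0) (hy : y ≠ 0) :
    valsNR n (fun v => p' (Equiv.swap x y v)) = valsNR n p' := by
  unfold valsNR
  have himg : Finset.image (fun v => Equiv.swap x y v) (NRs n) = NRs n := by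
    apply Finset.eq_of_subset_of_card_le
    · exact image_perm_subset _ (swap_zero hx hy) (Finset.Subset.refl _)
    · rw [card_image_perm]
  have hval : Multiset.map (fun v => Equiv.swap x y v) (NRs n).val = (NRs n).val := by
    rw [← Finset.image_val_of_injOn (Set.injOn_of_injective (Equiv.injective _))]
    rw [himg]
  calc Multiset.map (fun v => p' (Equiv.swap x y v)) (NRs n).val
      = Multiset.map p' (Multiset.map (fun v => Equiv.swap x y v) (NRs n).val) := by
        rw [Multiset.map_map]; rfl
    _ = Multiset.map p' (NRs n).val := by rw [hval]
/-! ### Endpoint: rank-sorted assignments equal the canonical one -/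

def posOf (n k r : ℕ) : Fin (n+1) :=
  ⟨min (if r ≤ k then r else n + k + 1 - r) n, Nat.lt_succ_of_le (Nat.min_le_right _ _)⟩

lemma posOf_val (hk : k + 2 ≤ n) (r : ℕ) (h1 : 1 ≤ r) (h2 : r ≤ n) :
    (posOf n k r).val = if r ≤ k then r else n + k + 1 - r := by
  show min (if r ≤ k then r else n + k + 1 - r) n = _
  split <;> omega

lemma rk_posOf (hk : k + 2 ≤ n) (r : ℕ) (h1 : 1 ≤ r) (h2 : r ≤ n) :
    rkf n k (posOf n k r) = r := by
  rcases le_or_gt r k with hc | hc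
  · have hval : (posOf n k r).val = r := by rw [posOf_val hk r h1 h2, if_pos hc]
    unfold rkf
    rw [hval, if_pos hc]
  · have hval : (posOf n k r).val = n + k + 1 - r := by
      rw [posOf_val hk r h1 h2, if_neg (by omega)]
    unfold rkf
    rw [hval, if_neg (by omega)]
    omega

lemma posOf_ne_zero (hk : k + 2 ≤ n) (r : ℕ) (h1 : 1 ≤ r) (h2 : r ≤ n) :
    posOf n k r ≠ 0 := by
  apply ne0
  rw [posOf_val hk r h1 h2]
  split <;> omega

lemma rk_bounds (v : Fin (n+1)) (hv : v ≠ 0) (hk : k + 2 ≤ n) :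
    1 ≤ rkf n k v ∧ rkf n k v ≤ n := by
  have h1 : 1 ≤ v.val := by
    rcases Nat.eq_zero_or_pos v.val with h | h
    · exact absurd (Fin.ext h) hv
    · exact h
  have h2 := val_le v
  unfold rkf
  split <;> omega

lemma posOf_rk (hk : k + 2 ≤ n) (v : Fin (n+1)) (hv : v ≠ 0) :
    posOf n k (rkf n k v) = v := by
  obtain ⟨h1, h2⟩ := rk_bounds v hv hk
  have h3 : 1 ≤ v.val := by
    rcases Nat.eq_zero_or_pos v.val with h | h
    · exact absurd (Fin.ext h) hv
    · exact h
  have h4 := val_le v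
  apply Fin.ext
  rcases le_or_gt v.val k with hc | hc
  · have hr : rkf n k v = v.val := by unfold rkf; rw [if_pos hc]
    rw [hr, posOf_val hk _ (by omega) (by omega), if_pos hc]
  · have hr : rkf n k v = n + k + 1 - v.val := by unfold rkf; rw [if_neg (by omega)]
    rw [hr, posOf_val hk _ (by omega) (by omega), if_neg (by omega)]
    omega

lemma map_eq_map_pointwise {α β : Type*} (f g : α → β) :
    ∀ (l : List α), l.map f = l.map g → ∀ v ∈ l, f v = g v := by
  intro l
  induction l with
  | nil => intro _ v hv; simp at hv
  | cons a t ih =>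
    intro h v hv
    simp only [List.map_cons, List.cons.injEq] at h
    rcases List.mem_cons.1 hv with rfl | hvt
    · exact h.1
    · exact ih h.2 v hvt

lemma sorted_eq (hnk : n ≤ 2*k) (hk : k + 2 ≤ n) (pr : Fin (n+1) → ℚ)
    (hsort : ∀ v w : Fin (n+1), v ≠ 0 → v ≤ w → pr v ≤ pr w)
    (p' : Fin (n+1) → ℚ)
    (hvals : valsNR n p' = valsNR n (spiderPrize n k pr))
    (hs : ∀ v w : Fin (n+1), v ≠ 0 → w ≠ 0 → rkf n k v < rkf n k w → p' v ≤ p' w) :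
    ∀ v : Fin (n+1), v ≠ 0 → p' v = spiderPrize n k pr v := by
  classical
  set p : Fin (n+1) → ℚ := spiderPrize n k pr with hp
  set L : List (Fin (n+1)) := (List.range n).map (fun j => posOf n k (j+1)) with hL
  have hmemL : ∀ v : Fin (n+1), v ≠ 0 → v ∈ L := by
    intro v hv
    rw [hL, List.mem_map]
    obtain ⟨h1, h2⟩ := rk_bounds v hv hk
    refine ⟨rkf n k v - 1, List.mem_range.2 (by omega), ?_⟩
    rw [Nat.sub_add_cancel h1]
    exact posOf_rk hk v hv
  have hLmem : ∀ v ∈ L, v ≠ 0 := by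
    intro v hv
    rw [hL, List.mem_map] at hv
    obtain ⟨j, hj, rfl⟩ := hv
    exact posOf_ne_zero hk (j+1) (by omega) (by have := List.mem_range.1 hj; omega)
  have hnodup : L.Nodup := by
    rw [hL]
    apply List.Nodup.map_on ?_ (List.nodup_range (n := n))
    intro a ha b hb heq
    have ha' := List.mem_range.1 ha
    have hb' := List.mem_range.1 hb
    have h2 : rkf n k (posOf n k (a+1)) = rkf n k (posOf n k (b+1)) := by rw [heq]
    rw [rk_posOf hk _ (by omega) (by omega), rk_posOf hk _ (by omega) (by omega)] at h2
    omega
  have hcoe : (L : Multiset (Fin (n+1))) = (NRs n).val := by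
    rw [Multiset.Nodup.ext (by exact hnodup) (NRs n).nodup]
    intro a
    constructor
    · intro ha
      exact Finset.mem_def.1 (mem_NRs.2 (hLmem a (by exact ha)))
    · intro ha
      exact hmemL a (mem_NRs.1 (Finset.mem_def.2 ha))
  have hperm : (L.map p').Perm (L.map p) := by
    rw [← Multiset.coe_eq_coe]
    have e1 : ((L.map p' : List ℚ) : Multiset ℚ) = valsNR n p' := by
      rw [← Multiset.map_coe, hcoe]; rfl
    have e2 : ((L.map p : List ℚ) : Multiset ℚ) = valsNR n p := by
      rw [← Multiset.map_coe, hcoe]; rfl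
    rw [e1, e2, hvals]
  have hsorted1 : (L.map p').Pairwise (· ≤ ·) := by
    rw [hL, List.map_map]
    rw [List.pairwise_map]
    apply List.Pairwise.imp_of_mem ?_ (List.pairwise_lt_range (n := n))
    intro a b ha hb hab
    have ha' := List.mem_range.1 ha
    have hb' := List.mem_range.1 hb
    apply hs
    · exact posOf_ne_zero hk _ (by omega) (by omega)
    · exact posOf_ne_zero hk _ (by omega) (by omega)
    · rw [rk_posOf hk _ (by omega) (by omega), rk_posOf hk _ (by omega) (by omega)]
      omega
  have hpPos : ∀ r : ℕ, 1 ≤ r → r ≤ n → ∀ (hr : r < n + 1),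
      p (posOf n k r) = pr ⟨r, hr⟩ := by
    intro r h1 h2 hr
    rw [hp]
    unfold spiderPrize
    by_cases hcase : r ≤ k
    · rw [dif_pos (by rw [posOf_val hk r h1 h2, if_pos hcase]; exact hcase)]
      congr 1
      apply Fin.ext
      rw [posOf_val hk r h1 h2, if_pos hcase]
    · rw [dif_neg (by rw [posOf_val hk r h1 h2, if_neg hcase]; omega)]
      congr 1
      apply Fin.ext
      show n + k + 1 - (posOf n k r).val = r
      rw [posOf_val hk r h1 h2, if_neg hcase]
      omega
  have hsorted2 : (L.map p).Pairwise (· ≤ ·) := by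
    rw [hL, List.map_map]
    rw [List.pairwise_map]
    apply List.Pairwise.imp_of_mem ?_ (List.pairwise_lt_range (n := n))
    intro a b ha hb hab
    have ha' := List.mem_range.1 ha
    have hb' := List.mem_range.1 hb
    show p (posOf n k (a+1)) ≤ p (posOf n k (b+1))
    rw [hpPos (a+1) (by omega) (by omega) (by omega),
      hpPos (b+1) (by omega) (by omega) (by omega)]
    apply hsort
    · exact ne0 (by simp)
    · exact (by simp [Fin.mk_le_mk]; omega : (⟨a+1, by omega⟩ : Fin (n+1)) ≤ ⟨b+1, by omega⟩)
  have heq : L.map p' = L.map p :=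
    hperm.eq_of_pairwise' hsorted1 hsorted2
  intro v hv
  exact map_eq_map_pointwise p' p L heq v (hmemL v hv)
/-! ### Main induction -/

lemma val_pos {v : Fin (n+1)} (hv : v ≠ 0) : 1 ≤ v.val := by
  rcases Nat.eq_zero_or_pos v.val with h | h
  · exact absurd (Fin.ext h) hv
  · exact h

lemma main (hnk : n ≤ 2*k) (hk : k + 2 ≤ n) (pr : Fin (n+1) → ℚ)
    (hsort : ∀ v w : Fin (n+1), v ≠ 0 → v ≤ w → pr v ≤ pr w) (B : ℚ) (hB : 0 ≤ B) :
    ∀ (N : ℕ) (p' : Fin (n+1) → ℚ),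
      valsNR n p' = valsNR n (spiderPrize n k pr) →
      ((PhiSet n k (spiderPrize n k pr)).filter
        (fun x => Phi n k p' < x)).card ≤ N →
      maxp n (spiderPar n k) (fun _ => 1) (spiderPrize n k pr) B ≤
        maxp n (spiderPar n k) (fun _ => 1) p' B := by
  intro N
  induction N using Nat.strong_induction_on with
  | _ N ih =>
  intro p' hvals hcard
  have descend : ∀ p'' : Fin (n+1) → ℚ,
      valsNR n p'' = valsNR n p' → Phi n k p' < Phi n k p'' →
      maxp n (spiderPar n k) (fun _ => 1) p'' B ≤
        maxp n (spiderPar n k) (fun _ => 1) p' B →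
      maxp n (spiderPar n k) (fun _ => 1) (spiderPrize n k pr) B ≤
        maxp n (spiderPar n k) (fun _ => 1) p' B := by
    intro p'' hv'' hphi hmax
    have hmem : Phi n k p'' ∈ PhiSet n k (spiderPrize n k pr) :=
      Phi_mem _ _ (hv''.trans hvals)
    have hlt := mu_lt hmem hphi
    exact (ih _ (by omega) p'' (hv''.trans hvals) le_rfl).trans hmax
  by_cases h1 : ∃ u l : Fin (n+1), (1 ≤ u.val ∧ u.val ≤ k) ∧ k < l.val ∧ p' l < p' u
  · -- level-one vs leaf inversion
    obtain ⟨u, l, ⟨hu1, hu2⟩, hl, hval⟩ := h1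
    have hu0 : u ≠ 0 := ne0 hu1
    have hl0 : l ≠ 0 := ne0 (by omega)
    have hne : u ≠ l := fun h => by rw [h] at hu2; omega
    apply descend _ (valsNR_swap p' hu0 hl0) ?_
      (swapA hnk p' B hB u l hu1 hu2 hl hval.le)
    rw [Phi_swap p' hu0 hl0 hne]
    have hr : rkf n k u < rkf n k l := by
      unfold rkf
      rw [if_pos hu2, if_neg (by omega)]
      have := val_le l
      omega
    have hc : (rkf n k u : ℚ) - rkf n k l < 0 := by
      have : (rkf n k u : ℚ) < rkf n k l := by exact_mod_cast hr
      linarith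
    have hpos := mul_pos_of_neg_of_neg hc (show p' l - p' u < 0 by linarith)
    linarith
  · by_cases h2 : ∃ u w : Fin (n+1), 1 ≤ u.val ∧ u.val < w.val ∧ w.val ≤ k ∧ p' w < p' u
    · obtain ⟨u, w, hu1, huw, hwk, hval⟩ := h2
      have hu0 : u ≠ 0 := ne0 hu1
      have hw0 : w ≠ 0 := ne0 (by omega)
      have hne : u ≠ w := fun h => by rw [h] at huw; omega
      have hruw : rkf n k u < rkf n k w := by
        unfold rkf
        rw [if_pos (by omega), if_pos hwk]
        exact huw
      have hphi2 : Phi n k p' < Phi n k (fun v => p' (Equiv.swap u w v)) := by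
        rw [Phi_swap p' hu0 hw0 hne]
        have hc : (rkf n k u : ℚ) - rkf n k w < 0 := by
          have : (rkf n k u : ℚ) < rkf n k w := by exact_mod_cast hruw
          linarith
        have hpos := mul_pos_of_neg_of_neg hc (show p' w - p' u < 0 by linarith)
        linarith
      by_cases hcless : n - k < w.val
      · exact descend _ (valsNR_swap p' hu0 hw0) hphi2
          (swapBE hnk p' B hB u w hu1 huw hcless hwk hval.le)
      · -- both are branch parents
        push_neg at hcless
        set lu : Fin (n+1) := ⟨k + u.val, by omega⟩ with hlu_def
        set lw : Fin (n+1) := ⟨k + w.val, by omega⟩ with hlw_def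
        have hluval : lu.val = k + u.val := rfl
        have hlwval : lw.val = k + w.val := rfl
        have hlu0 : lu ≠ 0 := ne0 (by omega)
        have hlw0 : lw ≠ 0 := ne0 (by omega)
        have hnel : lu ≠ lw := fun h => by
          have : lu.val = lw.val := by rw [h]
          omega
        by_cases hlf : p' lw ≤ p' lu
        · exact descend _ (valsNR_swap p' hu0 hw0) hphi2
            (swapGP hnk p' B hB u w lu lw hu1 huw hcless rfl rfl hval.le hlf)
        · -- whole-branch swap
          push_neg at hlf
          have hv2 : valsNR n (fun v => p' (Equiv.swap u w (Equiv.swap lu lw v)))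
              = valsNR n (fun v => p' (Equiv.swap u w v)) :=
            valsNR_swap (fun x => p' (Equiv.swap u w x)) hlu0 hlw0
          have hphi3 : Phi n k (fun v => p' (Equiv.swap u w (Equiv.swap lu lw v)))
              = Phi n k (fun v => p' (Equiv.swap u w v))
                + ((rkf n k lu : ℚ) - rkf n k lw)
                  * (p' (Equiv.swap u w lw) - p' (Equiv.swap u w lu)) :=
            Phi_swap (fun x => p' (Equiv.swap u w x)) hlu0 hlw0 hnel
          have hfixlu : Equiv.swap u w lu = lu := by
            apply Equiv.swap_apply_of_ne_of_ne
            · intro h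
              have hx : lu.val = u.val := by rw [h]
              omega
            · intro h
              have hx : lu.val = w.val := by rw [h]
              omega
          have hfixlw : Equiv.swap u w lw = lw := by
            apply Equiv.swap_apply_of_ne_of_ne
            · intro h
              have hx : lw.val = u.val := by rw [h]
              omega
            · intro h
              have hx : lw.val = w.val := by rw [h]
              omega
          apply descend _ (hv2.trans (valsNR_swap p' hu0 hw0)) ?_
            (swapBR hnk p' B hB u w lu lw hu1 huw hcless rfl rfl)
          rw [hphi3, hfixlu, hfixlw, Phi_swap p' hu0 hw0 hne]
          have hrl : rkf n k lw < rkf n k lu := by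
            unfold rkf
            rw [if_neg (by omega), if_neg (by omega)]
            have := val_le lw
            omega
          have hc1 : (rkf n k u : ℚ) - rkf n k w < 0 := by
            have : (rkf n k u : ℚ) < rkf n k w := by exact_mod_cast hruw
            linarith
          have hpos1 := mul_pos_of_neg_of_neg hc1 (show p' w - p' u < 0 by linarith)
          have hc2 : (0:ℚ) < (rkf n k lu : ℚ) - rkf n k lw := by
            have : (rkf n k lw : ℚ) < rkf n k lu := by exact_mod_cast hrl
            linarith
          have hpos2 := mul_pos hc2 (show (0:ℚ) < p' lw - p' lu by linarith)
          linarith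
    · -- two leaves
      by_cases h3 : ∃ v w : Fin (n+1), k < w.val ∧ w.val < v.val ∧ p' w < p' v
      · obtain ⟨v, w, hwv1, hwv2, hval⟩ := h3
        push_neg at h2
        have hvn := val_le v
        have hw0 : w ≠ 0 := ne0 (by omega)
        have hv0 : v ≠ 0 := ne0 (by omega)
        have hnel : w ≠ v := fun h => by rw [h] at hwv2; omega
        set pu : Fin (n+1) := ⟨w.val - k, by omega⟩ with hpu_def
        set pw : Fin (n+1) := ⟨v.val - k, by omega⟩ with hpw_def
        have hpuval : pu.val = w.val - k := rfl
        have hpwval : pw.val = v.val - k := rfl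
        have hpar : p' pu ≤ p' pw := by
          apply h2 pu pw (by omega) (by omega)
          omega
        apply descend _ (valsNR_swap p' hw0 hv0) ?_
          (swapLF hnk p' B hB pu pw w v (by omega) (by omega) (by omega)
            (by omega) (by omega) hpar hval.le)
        rw [Phi_swap p' hw0 hv0 hnel]
        have hr : rkf n k v < rkf n k w := by
          unfold rkf
          rw [if_neg (by omega), if_neg (by omega)]
          omega
        have hc : (0:ℚ) < (rkf n k w : ℚ) - rkf n k v := by
          have : (rkf n k v : ℚ) < rkf n k w := by exact_mod_cast hr
          linarith
        have hpos := mul_pos hc (show (0:ℚ) < p' v - p' w by linarith)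
        linarith
      · -- no inversions at all: p' is the canonical assignment
        push_neg at h1 h2 h3
        have hsorted : ∀ v w : Fin (n+1), v ≠ 0 → w ≠ 0 →
            rkf n k v < rkf n k w → p' v ≤ p' w := by
          intro v w hv hw hrk
          have hv1 := val_pos hv
          have hw1 := val_pos hw
          have hvn := val_le v
          have hwn := val_le w
          by_cases hvk : v.val ≤ k
          · by_cases hwk : w.val ≤ k
            · apply h2 v w hv1 ?_ hwk
              unfold rkf at hrk
              rw [if_pos hvk, if_pos hwk] at hrk
              exact hrk
            · exact h1 v w ⟨hv1, hvk⟩ (by omega)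
          · by_cases hwk : w.val ≤ k
            · exfalso
              unfold rkf at hrk
              rw [if_neg hvk, if_pos hwk] at hrk
              omega
            · apply h3 v w (by omega)
              unfold rkf at hrk
              rw [if_neg hvk, if_neg hwk] at hrk
              omega
        have heq := sorted_eq hnk hk pr hsort p' hvals hsorted
        exact le_of_eq (maxp_congr _ _ _ _ B (fun v hv => (heq v hv).symm))

end S14

/-- On a rooted 4-spider, putting the `k` smallest prizes on level one in
increasing order and the largest prizes on the leaves in decreasing order
(so the largest leaf prize hangs below the smallest level-one prize) is an
optimal security system for the P-model. -/
theorem stmt14 (n k : ℕ) (hnk : n ≤ 2 * k) (hk : k + 2 ≤ n)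
    (pr : Fin (n+1) → ℚ) (hpr : ∀ v, 0 ≤ pr v)
    (hsort : ∀ v w : Fin (n+1), v ≠ 0 → v ≤ w → pr v ≤ pr w)
    (m : ℕ) (p' : Fin (n+1) → ℚ)
    (hp' : valsNR n p' = valsNR n (spiderPrize n k pr)) :
    maxp n (spiderPar n k) (fun _ => 1) (spiderPrize n k pr) m ≤
      maxp n (spiderPar n k) (fun _ => 1) p' m := by
  exact S14.main hnk hk pr hsort (m : ℚ) (Nat.cast_nonneg m) _ p' hp' le_rfl
end

section
/- Let T be a rooted 4-spider (as above) and p a prize assignment such that p(uᵢ) ≤ p(uⱼ) for a level-one vertex uᵢ and a leaf uⱼ (uⱼ not the child of uᵢ). If p' is obtained from p by swapping the prizes of uᵢ and uⱼ, then for every integer budget m, maxp(m,𝟙,p) ≤ maxp(m,𝟙,p'). -/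

lemma image_max_unbot_le {α : Type*} (F : Finset α) (f g : α → ℚ)
    (h : ∀ A ∈ F, ∃ B ∈ F, f A ≤ g B) :
    ((F.image f).max).unbotD 0 ≤ ((F.image g).max).unbotD 0 := by
  classical
  rcases F.eq_empty_or_nonempty with rfl | hne
  · simp
  · obtain ⟨a, ha⟩ := Finset.max_of_nonempty (hne.image f)
    obtain ⟨b, hb⟩ := Finset.max_of_nonempty (hne.image g)
    rw [ha, hb]
    obtain ⟨A, hA, hfa⟩ := Finset.mem_image.mp (Finset.mem_of_max ha)
    obtain ⟨B, hB, hle⟩ := h A hA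
    have h1 : (g B : WithBot ℚ) ≤ b := hb ▸ Finset.le_max (Finset.mem_image_of_mem g hB)
    have h2 : g B ≤ b := by exact_mod_cast h1
    simp only [WithBot.unbotD_coe]
    calc a = f A := hfa.symm
    _ ≤ g B := hle
    _ ≤ b := h2


/-- On a rooted 4-spider, if `uᵢ` is a level-one vertex, `uⱼ` is a leaf that
is not the child of `uᵢ`, and `p uᵢ ≤ p uⱼ`, then swapping the prizes of
`uᵢ` and `uⱼ` never decreases the attacker's maximum prize. -/
theorem stmt15 (n k : ℕ) (hnk : n ≤ 2 * k) (hk : k + 2 ≤ n)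
    (p : Fin (n+1) → ℚ) (hp : ∀ v, 0 ≤ p v)
    (i j : Fin (n+1)) (hi1 : 1 ≤ i.val) (hik : i.val ≤ k)
    (hjk : k + 1 ≤ j.val) (hjn : j.val ≤ n)
    (hnotchild : j.val ≠ i.val + k)
    (hpij : p i ≤ p j) (m : ℕ) :
    maxp n (spiderPar n k) (fun _ => 1) p m ≤
      maxp n (spiderPar n k) (fun _ => 1) (p ∘ Equiv.swap i j) m := by
  classical
  have hij : i ≠ j := by
    intro h; rw [h] at hik; omega
  unfold maxp
  apply image_max_unbot_le
  intro A hA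
  simp only [Finset.mem_filter, Finset.mem_powerset] at hA
  obtain ⟨hsub, hclosed, hcost⟩ := hA
  -- parent values are always ≤ k, hence never equal to j
  have hparj : ∀ v : Fin (n+1), spiderPar n k v ≠ j := by
    intro v hv
    have : (spiderPar n k v).val ≤ k := by
      unfold spiderPar
      split
      · simp
      · simp only []
        omega
    rw [hv] at this; omega
  by_cases hjA : j ∈ A
  · by_cases hiA : i ∈ A
    · -- both in A: sums are equal via swap bijection
      refine ⟨A, Finset.mem_filter.mpr ⟨Finset.mem_powerset.mpr hsub, hclosed, hcost⟩, le_of_eq ?_⟩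
      refine Finset.sum_nbij' (fun v => Equiv.swap i j v) (fun v => Equiv.swap i j v)
        ?_ ?_ ?_ ?_ ?_
      · intro a haA
        rcases eq_or_ne a i with rfl | hai
        · simpa [Equiv.swap_apply_left] using hjA
        rcases eq_or_ne a j with rfl | haj
        · simpa [Equiv.swap_apply_right] using hiA
        · simpa [Equiv.swap_apply_of_ne_of_ne hai haj] using haA
      · intro a haA
        rcases eq_or_ne a i with rfl | hai
        · simpa [Equiv.swap_apply_left] using hjA
        rcases eq_or_ne a j with rfl | haj
        · simpa [Equiv.swap_apply_right] using hiA
        · simpa [Equiv.swap_apply_of_ne_of_ne hai haj] using haA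
      · intro a _; simp
      · intro a _; simp
      · intro a _; simp
    · -- j ∈ A, i ∉ A : replace j by i
      refine ⟨insert i (A.erase j), ?_, ?_⟩
      · have hiNE : i ∉ A.erase j := fun h => hiA (Finset.mem_of_mem_erase h)
        simp only [Finset.mem_filter, Finset.mem_powerset]
        refine ⟨?_, ?_, ?_⟩
        · intro v hv
          rcases Finset.mem_insert.mp hv with rfl | hv
          · simp only [Finset.mem_filter, Finset.mem_univ, true_and]
            intro h0; rw [h0] at hi1; simp at hi1
          · exact hsub (Finset.mem_of_mem_erase hv)
        · intro v hv
          rcases Finset.mem_insert.mp hv with rfl | hv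
          · left
            unfold spiderPar
            rw [dif_pos hik]
          · rcases hclosed v (Finset.mem_of_mem_erase hv) with h0 | hpar
            · exact Or.inl h0
            · right
              exact Finset.mem_insert_of_mem (Finset.mem_erase.mpr ⟨hparj v, hpar⟩)
        · -- cost: same cardinality
          have hcard : (insert i (A.erase j)).card = A.card := by
            rw [Finset.card_insert_of_notMem hiNE, Finset.card_erase_of_mem hjA]
            have : 1 ≤ A.card := Finset.card_pos.mpr ⟨j, hjA⟩
            omega
          simp only [Finset.sum_const, nsmul_eq_mul, mul_one] at hcost ⊢
          rw [hcard]
          exact hcost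
      · -- sums equal
        have hiNE : i ∉ A.erase j := fun h => hiA (Finset.mem_of_mem_erase h)
        rw [Finset.sum_insert hiNE]
        have h1 : ∀ v ∈ A.erase j, (p ∘ Equiv.swap i j) v = p v := by
          intro v hv
          obtain ⟨hvj, hvA⟩ := Finset.mem_erase.mp hv
          have hvi : v ≠ i := fun h => hiA (h ▸ hvA)
          simp [Function.comp, Equiv.swap_apply_of_ne_of_ne hvi hvj]
        rw [Finset.sum_congr rfl h1]
        have : (p ∘ Equiv.swap i j) i = p j := by simp
        rw [this, Finset.add_sum_erase _ p hjA]
  · -- j ∉ A : use A itself; p' ≥ p pointwise on A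
    refine ⟨A, Finset.mem_filter.mpr ⟨Finset.mem_powerset.mpr hsub, hclosed, hcost⟩, ?_⟩
    apply Finset.sum_le_sum
    intro v hv
    have hvj : v ≠ j := fun h => hjA (h ▸ hv)
    rcases eq_or_ne v i with rfl | hvi
    · simpa [Function.comp] using hpij
    · simp [Function.comp, Equiv.swap_apply_of_ne_of_ne hvi hvj]
end

section
/- Let T be a rooted 4-spider and p a prize assignment such that for some i < j in {1,…,n−k}, p(uᵢ) ≤ p(uⱼ) and p(u_{i+k}) ≥ p(u_{j+k}). If p' is obtained from p by swapping the prizes of the leaves u_{i+k} and u_{j+k}, then for every integer budget m, maxp(m,𝟙,p) ≤ maxp(m,𝟙,p'). -/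
open Classical Finset in
lemma auxswap (n : ℕ) (par : Fin (n+1) → Fin (n+1)) (p : Fin (n+1) → ℚ)
    (a b ui uj : Fin (n+1))
    (hab : a ≠ b) (haui : a ≠ ui) (hauj : a ≠ uj) (hbuj : b ≠ uj) (huij : ui ≠ uj)
    (hb0 : b ≠ 0) (hui0 : ui ≠ 0) (huj0 : uj ≠ 0)
    (hpa : par a = ui) (hpb : par b = uj) (hpuj : par uj = 0)
    (hnochild_a : ∀ v, par v ≠ a)
    (honly_ui : ∀ v, par v = ui → v = a)
    (hpij : p ui ≤ p uj) (hleaf : p b ≤ p a)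
    (m : ℕ) :
    maxp n par (fun _ => 1) p m ≤ maxp n par (fun _ => 1) (p ∘ Equiv.swap a b) m := by
  set g : Fin (n+1) → ℚ := p ∘ Equiv.swap a b with hg
  set S : Finset (Finset (Fin (n+1))) :=
    (((Finset.univ.filter (fun v : Fin (n+1) => v ≠ 0)).powerset).filter
      (fun A => (∀ v ∈ A, par v = 0 ∨ par v ∈ A) ∧ ∑ v ∈ A, (fun _ => (1:ℚ)) v ≤ (m:ℚ))) with hS
  have hmem_le : ∀ (q : Fin (n+1) → ℚ), ∀ A ∈ S,
      ∑ v ∈ A, q v ≤ ((S.image (fun A => ∑ v ∈ A, q v)).max).unbotD 0 := by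
    intro q A hA
    have h1 := Finset.le_max (Finset.mem_image_of_mem (fun A => ∑ v ∈ A, q v) hA)
    rcases hM : (S.image (fun A => ∑ v ∈ A, q v)).max with _ | x
    · rw [hM] at h1
      exact absurd h1 (WithBot.not_coe_le_bot _)
    · rw [hM] at h1
      have h1' : (↑(∑ v ∈ A, q v) : WithBot ℚ) ≤ ↑x := h1
      exact WithBot.coe_le_coe.mp h1'
  -- key combinatorial step
  have key : ∀ A ∈ S, ∃ A' ∈ S, ∑ v ∈ A, p v ≤ ∑ v ∈ A', g v := by
    intro A hA
    simp only [hS, Finset.mem_filter, Finset.mem_powerset] at hA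
    obtain ⟨hsub, hclo, hcost⟩ := hA
    have hgne : ∀ v, v ≠ a → v ≠ b → g v = p v := by
      intro v h1 h2
      simp [hg, Equiv.swap_apply_of_ne_of_ne h1 h2]
    have hga : g a = p b := by simp [hg]
    have hgb : g b = p a := by simp [hg]
    by_cases ha : a ∈ A
    · by_cases hb : b ∈ A
      · -- both: same set
        refine ⟨A, ?_, ?_⟩
        · simp only [hS, Finset.mem_filter, Finset.mem_powerset]
          exact ⟨hsub, hclo, hcost⟩
        · have hmemiff : ∀ v : Fin (n+1), v ∈ A ↔ Equiv.swap a b v ∈ A := by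
            intro v
            rcases eq_or_ne v a with rfl | h1
            · simp [Equiv.swap_apply_left, ha, hb]
            rcases eq_or_ne v b with rfl | h2
            · simp [Equiv.swap_apply_right, ha, hb]
            · rw [Equiv.swap_apply_of_ne_of_ne h1 h2]
          exact le_of_eq (Finset.sum_equiv (Equiv.swap a b) hmemiff
            (fun v _ => by simp [hg, Equiv.swap_apply_self]))
      · -- a ∈ A, b ∉ A
        have hui : ui ∈ A := by
          rcases hclo a ha with h | h
          · rw [hpa] at h; exact absurd h hui0
          · rwa [hpa] at h
        by_cases hj : uj ∈ A
        · refine ⟨insert b (A.erase a), ?_, ?_⟩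
          · simp only [hS, Finset.mem_filter, Finset.mem_powerset]
            refine ⟨?_, ?_, ?_⟩
            · intro v hv
              rcases Finset.mem_insert.mp hv with rfl | hv
              · simp [hb0]
              · exact hsub (Finset.mem_of_mem_erase hv)
            · intro v hv
              rcases Finset.mem_insert.mp hv with rfl | hv
              · right; rw [hpb]
                exact Finset.mem_insert_of_mem (Finset.mem_erase.mpr ⟨(Ne.symm hauj), hj⟩)
              · rcases hclo v (Finset.mem_of_mem_erase hv) with h | h
                · exact Or.inl h
                · right
                  exact Finset.mem_insert_of_mem
                    (Finset.mem_erase.mpr ⟨hnochild_a v, h⟩)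
            · have hcard : (insert b (A.erase a)).card = A.card := by
                rw [Finset.card_insert_of_notMem (fun h => hb (Finset.mem_of_mem_erase h)),
                  Finset.card_erase_of_mem ha]
                have : 1 ≤ A.card := Finset.card_pos.mpr ⟨a, ha⟩
                omega
              simpa [Finset.sum_const, hcard] using hcost
          · have h1 : ∑ v ∈ insert b (A.erase a), g v
                = p a + ∑ v ∈ A.erase a, p v := by
              rw [Finset.sum_insert (fun h => hb (Finset.mem_of_mem_erase h)), hgb]
              congr 1
              refine Finset.sum_congr rfl (fun v hv => hgne v ?_ ?_)
              · exact (Finset.mem_erase.mp hv).1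
              · exact fun h => hb (h ▸ Finset.mem_of_mem_erase hv)
            rw [h1, Finset.add_sum_erase _ p ha]
        · -- uj ∉ A: swap ui,a for uj,b
          have huia : ui ∈ A.erase a := Finset.mem_erase.mpr ⟨Ne.symm haui, hui⟩
          set E := (A.erase a).erase ui with hE
          have hbE : b ∉ insert uj E := by
            intro h
            rcases Finset.mem_insert.mp h with h | h
            · exact hbuj h
            · exact hb (Finset.mem_of_mem_erase (Finset.mem_of_mem_erase h))
          have hujE : uj ∉ E := fun h => hj (Finset.mem_of_mem_erase (Finset.mem_of_mem_erase h))
          refine ⟨insert b (insert uj E), ?_, ?_⟩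
          · simp only [hS, Finset.mem_filter, Finset.mem_powerset]
            refine ⟨?_, ?_, ?_⟩
            · intro v hv
              rcases Finset.mem_insert.mp hv with rfl | hv
              · simp [hb0]
              · rcases Finset.mem_insert.mp hv with rfl | hv
                · simp [huj0]
                · exact hsub (Finset.mem_of_mem_erase (Finset.mem_of_mem_erase hv))
            · intro v hv
              rcases Finset.mem_insert.mp hv with rfl | hv
              · right; rw [hpb]
                exact Finset.mem_insert_of_mem (Finset.mem_insert_self _ _)
              · rcases Finset.mem_insert.mp hv with rfl | hv
                · left; exact hpuj
                · have hvA : v ∈ A := Finset.mem_of_mem_erase (Finset.mem_of_mem_erase hv)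
                  rcases hclo v hvA with h | h
                  · exact Or.inl h
                  · right
                    have hvne : v ≠ a := (Finset.mem_erase.mp (Finset.mem_of_mem_erase hv)).1
                    have h2 : par v ≠ ui := fun hc => hvne (honly_ui v hc)
                    exact Finset.mem_insert_of_mem (Finset.mem_insert_of_mem
                      (Finset.mem_erase.mpr ⟨h2, Finset.mem_erase.mpr ⟨hnochild_a v, h⟩⟩))
            · have hcard : (insert b (insert uj E)).card = A.card := by
                rw [Finset.card_insert_of_notMem hbE, Finset.card_insert_of_notMem hujE,
                  hE, Finset.card_erase_of_mem huia, Finset.card_erase_of_mem ha]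
                have h1 : 1 ≤ A.card := Finset.card_pos.mpr ⟨a, ha⟩
                have h2 : 1 ≤ (A.erase a).card := Finset.card_pos.mpr ⟨ui, huia⟩
                rw [Finset.card_erase_of_mem ha] at h2
                omega
              simpa [Finset.sum_const, hcard] using hcost
          · have hEab : ∀ v ∈ E, g v = p v := by
              intro v hv
              refine hgne v (Finset.mem_erase.mp (Finset.mem_of_mem_erase hv)).1
                (fun h => hb (h ▸ Finset.mem_of_mem_erase (Finset.mem_of_mem_erase hv)))
            have h1 : ∑ v ∈ insert b (insert uj E), g v = p a + (p uj + ∑ v ∈ E, p v) := by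
              rw [Finset.sum_insert hbE, Finset.sum_insert hujE, hgb,
                hgne uj (Ne.symm hauj) (Ne.symm hbuj)]
              congr 1
              congr 1
              exact Finset.sum_congr rfl hEab
            have h2 : ∑ v ∈ A, p v = p a + (p ui + ∑ v ∈ E, p v) := by
              rw [hE, Finset.add_sum_erase _ p huia, Finset.add_sum_erase _ p ha]
            rw [h1, h2]
            have := hpij
            linarith
    · by_cases hb : b ∈ A
      · -- b ∈ A, a ∉ A: same set, value increases
        refine ⟨A, ?_, ?_⟩
        · simp only [hS, Finset.mem_filter, Finset.mem_powerset]
          exact ⟨hsub, hclo, hcost⟩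
        · rw [← Finset.add_sum_erase _ p hb, ← Finset.add_sum_erase _ g hb, hgb]
          have : ∑ v ∈ A.erase b, g v = ∑ v ∈ A.erase b, p v := by
            refine Finset.sum_congr rfl (fun v hv => hgne v ?_ (Finset.mem_erase.mp hv).1)
            exact fun h => ha (h ▸ Finset.mem_of_mem_erase hv)
          rw [this]
          linarith
      · -- neither
        refine ⟨A, ?_, le_of_eq ?_⟩
        · simp only [hS, Finset.mem_filter, Finset.mem_powerset]
          exact ⟨hsub, hclo, hcost⟩
        · refine Finset.sum_congr rfl (fun v hv => (hgne v ?_ ?_).symm)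
          · exact fun h => ha (h ▸ hv)
          · exact fun h => hb (h ▸ hv)
  -- wrap up
  have hempty : ∅ ∈ S := by
    simp only [hS, Finset.mem_filter, Finset.mem_powerset]
    refine ⟨Finset.empty_subset _, fun v hv => absurd hv (Finset.notMem_empty v), ?_⟩
    simp
  show ((S.image (fun A => ∑ v ∈ A, p v)).max).unbotD 0 ≤
    ((S.image (fun A => ∑ v ∈ A, g v)).max).unbotD 0
  rcases hM : (S.image (fun A => ∑ v ∈ A, p v)).max with _ | x
  · have := hmem_le g ∅ hempty
    simp at this; exact this
  · have hx : x ∈ S.image (fun A => ∑ v ∈ A, p v) := Finset.mem_of_max hM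
    obtain ⟨A, hA, hAx⟩ := Finset.mem_image.mp hx
    obtain ⟨A', hA', hle⟩ := key A hA
    show x ≤ _
    rw [← hAx]
    exact le_trans hle (hmem_le g A' hA')

/-- On a rooted 4-spider, if `i < j` in `{1,…,n-k}` with `p uᵢ ≤ p uⱼ` and
`p u_{i+k} ≥ p u_{j+k}`, then swapping the prizes of the leaves `u_{i+k}` and
`u_{j+k}` never decreases the attacker's maximum prize. -/
theorem stmt16 (n k : ℕ) (hnk : n ≤ 2 * k) (hk : k + 2 ≤ n)
    (p : Fin (n+1) → ℚ) (hp : ∀ v, 0 ≤ p v)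
    (i j : ℕ) (hi1 : 1 ≤ i) (hij : i < j) (hjnk : j + k ≤ n)
    (hpij : p ⟨i, by omega⟩ ≤ p ⟨j, by omega⟩)
    (hleaf : p ⟨j + k, by omega⟩ ≤ p ⟨i + k, by omega⟩)
    (m : ℕ) :
    maxp n (spiderPar n k) (fun _ => 1) p m ≤
      maxp n (spiderPar n k) (fun _ => 1)
        (p ∘ Equiv.swap ⟨i + k, by omega⟩ ⟨j + k, by omega⟩) m := by

  refine auxswap n (spiderPar n k) p ⟨i + k, by omega⟩ ⟨j + k, by omega⟩
    ⟨i, by omega⟩ ⟨j, by omega⟩ ?_ ?_ ?_ ?_ ?_ ?_ ?_ ?_ ?_ ?_ ?_ ?_ ?_ hpij hleaf m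
  · simp [Fin.ext_iff]; omega
  · simp [Fin.ext_iff]; omega
  · simp [Fin.ext_iff]; omega
  · simp [Fin.ext_iff]; omega
  · simp [Fin.ext_iff]; omega
  · simp [Fin.ext_iff]; omega
  · simp [Fin.ext_iff]; omega
  · simp [Fin.ext_iff]; omega
  · unfold spiderPar
    rw [dif_neg (by simp; omega)]
    simp [Fin.ext_iff]
  · unfold spiderPar
    rw [dif_neg (by simp; omega)]
    simp [Fin.ext_iff]
  · unfold spiderPar
    rw [dif_pos (by simp; omega)]
  · intro v h
    unfold spiderPar at h
    split_ifs at h with hv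
    · have := congrArg Fin.val h
      simp at this
      omega
    · have := congrArg Fin.val h
      have h2 := v.isLt
      simp at this
      omega
  · intro v h
    unfold spiderPar at h
    split_ifs at h with hv
    · have := congrArg Fin.val h
      simp at this
      omega
    · have := congrArg Fin.val h
      simp at this
      exact Fin.ext (by simp; omega)
end

section
/- Let T be a rooted tree on n non-root vertices and let p̃ be a scaled prize vector (entries in [0,1] ∩ ℚ). Then the security system (T, 𝟙, p̃) is optimal for the P-model (T, I, {p̃}) if and only if the security system (T, 𝟙 − p̃, 𝟙) is optimal for the C-model (T, {𝟙 − p̃}, I); here optimality in the P-model quantifies over all prize vectors p̃' with the same underlying multiset as p̃, and optimality in the C-model quantifies over all cost vectors with the same underlying multiset as 𝟙 − p̃. -/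
def NRs (n : ℕ) : Finset (Fin (n+1)) := Finset.univ.filter (fun v => v ≠ 0)

def feas (n : ℕ) (par : Fin (n+1) → Fin (n+1)) (c : Fin (n+1) → ℚ) (B : ℚ) :
    Finset (Finset (Fin (n+1))) :=
  ((NRs n).powerset).filter
    (fun A => (∀ v ∈ A, par v = 0 ∨ par v ∈ A) ∧ ∑ v ∈ A, c v ≤ B)

lemma maxp_def (n : ℕ) (par : Fin (n+1) → Fin (n+1)) (c p : Fin (n+1) → ℚ) (B : ℚ) :
    maxp n par c p B
      = (((feas n par c B).image (fun A => ∑ v ∈ A, p v)).max).unbotD 0 := rfl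

variable {n : ℕ} {par : Fin (n+1) → Fin (n+1)}

lemma mem_feas {c : Fin (n+1) → ℚ} {B : ℚ} {A : Finset (Fin (n+1))} :
    A ∈ feas n par c B ↔
      A ⊆ NRs n ∧ (∀ v ∈ A, par v = 0 ∨ par v ∈ A) ∧ ∑ v ∈ A, c v ≤ B := by
  simp [feas, Finset.mem_filter, Finset.mem_powerset, and_assoc]

lemma card_NRs : (NRs n).card = n := by
  simp [NRs, Finset.filter_ne']

lemma mem_NRs {v : Fin (n+1)} : v ∈ NRs n ↔ v ≠ 0 := by simp [NRs]

lemma empty_feas {c : Fin (n+1) → ℚ} {B : ℚ} (hB : 0 ≤ B) : ∅ ∈ feas n par c B := by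
  simp [feas, hB]

lemma sum_le_maxp {c p : Fin (n+1) → ℚ} {B : ℚ} {A : Finset (Fin (n+1))}
    (hA : A ∈ feas n par c B) : ∑ v ∈ A, p v ≤ maxp n par c p B := by
  rw [maxp_def]
  have hmem : ∑ v ∈ A, p v ∈ (feas n par c B).image (fun A => ∑ v ∈ A, p v) :=
    Finset.mem_image_of_mem _ hA
  have hne : ((feas n par c B).image fun A => ∑ v ∈ A, p v).Nonempty := ⟨_, hmem⟩
  rw [← Finset.coe_max' hne, WithBot.unbotD_coe]
  exact Finset.le_max' _ _ hmem

lemma maxp_attained {c p : Fin (n+1) → ℚ} {B : ℚ} (hB : 0 ≤ B) :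
    ∃ A ∈ feas n par c B, maxp n par c p B = ∑ v ∈ A, p v := by
  have hne : ((feas n par c B).image fun A => ∑ v ∈ A, p v).Nonempty :=
    ⟨_, Finset.mem_image_of_mem _ (empty_feas hB)⟩
  rw [maxp_def, ← Finset.coe_max' hne, WithBot.unbotD_coe]
  obtain ⟨A, hA, hval⟩ := Finset.mem_image.mp (Finset.max'_mem _ hne)
  exact ⟨A, hA, hval.symm⟩

lemma extend_step (hpar : ∀ v : Fin (n+1), v ≠ 0 → (par v).val < v.val)
    {A : Finset (Fin (n+1))} (hsub : A ⊆ NRs n)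
    (hpc : ∀ v ∈ A, par v = 0 ∨ par v ∈ A) (hcard : A.card < n) :
    ∃ v, v ∉ A ∧ v ∈ NRs n ∧
      (∀ w ∈ insert v A, par w = 0 ∨ par w ∈ insert v A) := by
  have hne : (NRs n \ A).Nonempty := by
    rw [← Finset.card_pos, Finset.card_sdiff_of_subset hsub, card_NRs]
    omega
  set v := (NRs n \ A).min' hne with hv
  have hvmem : v ∈ NRs n \ A := Finset.min'_mem _ hne
  obtain ⟨hvNR, hvA⟩ := Finset.mem_sdiff.mp hvmem
  have hpv : par v = 0 ∨ par v ∈ A := by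
    by_contra hcon
    push_neg at hcon
    obtain ⟨h0, hA⟩ := hcon
    have hmem : par v ∈ NRs n \ A := Finset.mem_sdiff.mpr ⟨mem_NRs.mpr h0, hA⟩
    have := Finset.min'_le _ _ hmem
    have hlt := hpar v (mem_NRs.mp hvNR)
    rw [← hv] at this
    exact absurd (Fin.le_def.mp this) (by omega)
  refine ⟨v, hvA, hvNR, ?_⟩
  intro w hw
  rcases Finset.mem_insert.mp hw with rfl | hwA
  · rcases hpv with h | h
    · exact Or.inl h
    · exact Or.inr (Finset.mem_insert_of_mem h)
  · rcases hpc w hwA with h | h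
    · exact Or.inl h
    · exact Or.inr (Finset.mem_insert_of_mem h)

lemma extend (hpar : ∀ v : Fin (n+1), v ≠ 0 → (par v).val < v.val)
    {A : Finset (Fin (n+1))} (hsub : A ⊆ NRs n)
    (hpc : ∀ v ∈ A, par v = 0 ∨ par v ∈ A) {j : ℕ} (h1 : A.card ≤ j) (h2 : j ≤ n) :
    ∃ A', A ⊆ A' ∧ A' ⊆ NRs n ∧ (∀ w ∈ A', par w = 0 ∨ par w ∈ A') ∧ A'.card = j := by
  induction j, h1 using Nat.le_induction with
  | base => exact ⟨A, subset_rfl, hsub, hpc, rfl⟩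
  | succ j hj ih =>
    obtain ⟨A', hAA', hsub', hpc', hcard'⟩ := ih (by omega)
    obtain ⟨v, hvA', hvNR, hpc''⟩ := extend_step hpar hsub' hpc' (by omega)
    refine ⟨insert v A', hAA'.trans (Finset.subset_insert _ _),
      Finset.insert_subset hvNR hsub', hpc'', ?_⟩
    rw [Finset.card_insert_of_notMem hvA', hcard']

lemma shrink_step (hpar : ∀ v : Fin (n+1), v ≠ 0 → (par v).val < v.val)
    {A : Finset (Fin (n+1))} (hsub : A ⊆ NRs n)
    (hpc : ∀ v ∈ A, par v = 0 ∨ par v ∈ A) (hne : A.Nonempty) :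
    ∃ v ∈ A, ∀ w ∈ A.erase v, par w = 0 ∨ par w ∈ A.erase v := by
  set v := A.max' hne with hv
  refine ⟨v, A.max'_mem hne, ?_⟩
  intro w hw
  obtain ⟨hwv, hwA⟩ := Finset.mem_erase.mp hw
  rcases hpc w hwA with h | h
  · exact Or.inl h
  · refine Or.inr (Finset.mem_erase.mpr ⟨?_, h⟩)
    intro hcon
    have hw0 : w ≠ 0 := mem_NRs.mp (hsub hwA)
    have hlt := hpar w hw0
    have hle : w ≤ v := A.le_max' w hwA
    rw [hcon, hv] at hlt
    exact absurd (Fin.le_def.mp hle) (by omega)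

lemma shrink (hpar : ∀ v : Fin (n+1), v ≠ 0 → (par v).val < v.val) :
    ∀ (N : ℕ) (A : Finset (Fin (n+1))), A.card = N → A ⊆ NRs n →
      (∀ v ∈ A, par v = 0 ∨ par v ∈ A) → ∀ j ≤ N,
      ∃ A', A' ⊆ A ∧ (∀ w ∈ A', par w = 0 ∨ par w ∈ A') ∧ A'.card = j := by
  intro N
  induction N with
  | zero =>
    intro A hcard _ _ j hj
    interval_cases j
    exact ⟨∅, Finset.empty_subset _, by simp, rfl⟩
  | succ N ih =>
    intro A hcard hsub hpc j hj
    rcases eq_or_lt_of_le hj with rfl | hlt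
    · exact ⟨A, subset_rfl, hpc, hcard⟩
    · have hne : A.Nonempty := Finset.card_pos.mp (by omega)
      obtain ⟨v, hvA, hpc'⟩ := shrink_step hpar hsub hpc hne
      obtain ⟨A', hsub', hpc'', hcard'⟩ := ih (A.erase v)
        (by rw [Finset.card_erase_of_mem hvA, hcard]; omega) 
        ((Finset.erase_subset _ _).trans hsub) hpc' j (by omega)
      exact ⟨A', hsub'.trans (Finset.erase_subset _ _), hpc'', hcard'⟩

lemma vals_mem {f : Fin (n+1) → ℚ} {v : Fin (n+1)} (hv : v ≠ 0) : f v ∈ valsNR n f := by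
  apply Multiset.mem_map_of_mem
  simpa [Finset.mem_filter] using hv

lemma vals_bound {f g : Fin (n+1) → ℚ} (h : valsNR n f = valsNR n g)
    (hg : ∀ v, 0 ≤ g v ∧ g v ≤ 1) : ∀ v : Fin (n+1), v ≠ 0 → 0 ≤ f v ∧ f v ≤ 1 := by
  intro v hv
  have hmem : f v ∈ valsNR n g := h ▸ vals_mem hv
  obtain ⟨w, _, hval⟩ := Multiset.mem_map.mp hmem
  rw [← hval]
  exact hg w

lemma vals_one_sub (f : Fin (n+1) → ℚ) :
    valsNR n (fun v => 1 - f v) = (valsNR n f).map (fun x => 1 - x) := by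
  simp [valsNR, Multiset.map_map, Function.comp]

lemma vals_dual {f g : Fin (n+1) → ℚ} (h : valsNR n f = valsNR n g) :
    valsNR n (fun v => 1 - f v) = valsNR n (fun v => 1 - g v) := by
  rw [vals_one_sub, vals_one_sub, h]

lemma sum_one (A : Finset (Fin (n+1))) : ∑ _v ∈ A, (1:ℚ) = A.card := by simp

lemma sum_one_sub (f : Fin (n+1) → ℚ) (A : Finset (Fin (n+1))) :
    ∑ v ∈ A, (1 - f v) = A.card - ∑ v ∈ A, f v := by
  rw [Finset.sum_sub_distrib, sum_one]


/-- Duality: for a scaled prize vector `p̃`, the security system `(T,𝟙,p̃)`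
is optimal for the P-model if and only if the dual security system
`(T,𝟙-p̃,𝟙)` is optimal for the C-model. -/
theorem stmt19 (n : ℕ) (par : Fin (n+1) → Fin (n+1))
    (hpar : ∀ v : Fin (n+1), v ≠ 0 → (par v).val < v.val)
    (p : Fin (n+1) → ℚ) (hscaled : ∀ v, 0 ≤ p v ∧ p v ≤ 1) :
    (∀ m : ℕ, ∀ p' : Fin (n+1) → ℚ, valsNR n p' = valsNR n p →
        maxp n par (fun _ => 1) p m ≤ maxp n par (fun _ => 1) p' m) ↔
      (∀ B : ℚ, 0 ≤ B → ∀ c' : Fin (n+1) → ℚ,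
        valsNR n c' = valsNR n (fun v => 1 - p v) →
        maxp n par (fun v => 1 - p v) (fun _ => 1) B ≤
          maxp n par c' (fun _ => 1) B) := by
  constructor
  · -- P-optimal → C-optimal
    intro h B hB c' hc'
    -- pointwise bounds on c' over non-root vertices
    have hc'bnd : ∀ v : Fin (n+1), v ≠ 0 → 0 ≤ c' v ∧ c' v ≤ 1 := by
      refine vals_bound hc' (fun v => ⟨?_, ?_⟩) <;>
        [linarith [(hscaled v).2]; linarith [(hscaled v).1]]
    -- optimal attack for the C-model instance (1-p, 1, B)
    obtain ⟨A, hA, hval⟩ :=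
      maxp_attained (par := par) (c := fun v => 1 - p v) (p := fun _ => (1:ℚ)) hB
    obtain ⟨hAsub, hApc, hAcost⟩ := mem_feas.mp hA
    set k := A.card with hk
    have hkn : k ≤ n := by
      rw [hk]; exact le_of_le_of_eq (Finset.card_le_card hAsub) card_NRs
    -- value of the left side is k
    have hvalk : maxp n par (fun v => 1 - p v) (fun _ => 1) B = (k : ℚ) := by
      rw [hval, sum_one]
    -- translate the cost bound: ∑_A p ≥ k - B
    have hApsum : (k : ℚ) - B ≤ ∑ v ∈ A, p v := by
      rw [sum_one_sub] at hAcost; linarith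
    -- A is feasible for the P-model with budget k
    have hAfeas : A ∈ feas n par (fun _ => 1) (k : ℚ) :=
      mem_feas.mpr ⟨hAsub, hApc, by rw [sum_one]⟩
    set p' : Fin (n+1) → ℚ := fun v => 1 - c' v with hp'
    have hvalsp' : valsNR n p' = valsNR n p := by
      rw [hp', vals_dual hc']
      have : (fun v : Fin (n+1) => 1 - (1 - p v)) = p := by funext v; ring
      rw [this]
    have h1 : (k : ℚ) - B ≤ maxp n par (fun _ => 1) p k :=
      le_trans hApsum (sum_le_maxp hAfeas)
    have h2 := h k p' hvalsp'
    -- optimal attack for the P-model instance (1, p', k)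
    obtain ⟨A', hA', hval'⟩ := maxp_attained (par := par) (c := fun _ => (1:ℚ))
      (p := p') (B := (k : ℚ)) (Nat.cast_nonneg k)
    obtain ⟨hA'sub, hA'pc, hA'cost⟩ := mem_feas.mp hA'
    rw [sum_one] at hA'cost
    have hA'card : A'.card ≤ k := Nat.cast_le.mp hA'cost
    have hA'psum : (k : ℚ) - B ≤ ∑ v ∈ A', p' v := by
      rw [← hval']; exact le_trans h1 (le_trans h2 (le_of_eq rfl))
    -- extend A' to a parent-closed set of size exactly k
    obtain ⟨A'', hsub'', hsubNR'', hpc'', hcard''⟩ := extend hpar hA'sub hA'pc hA'card hkn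
    -- cost of A'' under c' is at most B
    have hcostsplit : ∑ v ∈ A'' \ A', c' v + ∑ v ∈ A', c' v = ∑ v ∈ A'', c' v :=
      Finset.sum_sdiff hsub''
    have hsdcard : (A'' \ A').card = k - A'.card := by
      rw [Finset.card_sdiff_of_subset hsub'', hcard'']
    have hsdbound : ∑ v ∈ A'' \ A', c' v ≤ ((k - A'.card : ℕ) : ℚ) := by
      rw [← hsdcard]
      calc ∑ v ∈ A'' \ A', c' v ≤ ∑ _v ∈ A'' \ A', (1:ℚ) := by
            refine Finset.sum_le_sum (fun v hv => ?_)
            exact (hc'bnd v (mem_NRs.mp (hsubNR'' (Finset.mem_sdiff.mp hv).1))).2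
        _ = ((A'' \ A').card : ℚ) := sum_one _
    have hA'c' : ∑ v ∈ A', c' v = (A'.card : ℚ) - ∑ v ∈ A', p' v := by
      have : ∑ v ∈ A', c' v = ∑ v ∈ A', (1 - p' v) := by
        refine Finset.sum_congr rfl (fun v _ => ?_); rw [hp']; ring
      rw [this, sum_one_sub]
    have hcast : ((k - A'.card : ℕ) : ℚ) = (k : ℚ) - (A'.card : ℚ) :=
      Nat.cast_sub hA'card
    have hA''cost : ∑ v ∈ A'', c' v ≤ B := by
      rw [← hcostsplit, hA'c']
      rw [hcast] at hsdbound
      linarith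
    have hA''feas : A'' ∈ feas n par c' B := mem_feas.mpr ⟨hsubNR'', hpc'', hA''cost⟩
    have := sum_le_maxp (p := fun _ => (1:ℚ)) hA''feas
    rw [sum_one, hcard''] at this
    rw [hvalk]
    exact this
  · -- C-optimal → P-optimal
    intro h m p' hp'
    have hp'bnd : ∀ v : Fin (n+1), v ≠ 0 → 0 ≤ p' v ∧ p' v ≤ 1 :=
      vals_bound hp' hscaled
    obtain ⟨A, hA, hval⟩ := maxp_attained (par := par) (c := fun _ => (1:ℚ))
      (p := p) (B := (m : ℚ)) (Nat.cast_nonneg m)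
    obtain ⟨hAsub, hApc, hAcost⟩ := mem_feas.mp hA
    rw [sum_one] at hAcost
    set k := A.card with hk
    set V := ∑ v ∈ A, p v with hV
    set B := (k : ℚ) - V with hBdef
    have hVk : V ≤ (k : ℚ) := by
      rw [hV, hk, ← sum_one A]
      exact Finset.sum_le_sum (fun v _ => (hscaled v).2)
    have hB : 0 ≤ B := by rw [hBdef]; linarith
    set c' : Fin (n+1) → ℚ := fun v => 1 - p' v with hc'
    have hvalsc' : valsNR n c' = valsNR n (fun v => 1 - p v) := by
      rw [hc']; exact vals_dual hp'
    -- A feasible for (1-p, 1, B)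
    have hAfeas : A ∈ feas n par (fun v => 1 - p v) B :=
      mem_feas.mpr ⟨hAsub, hApc, by rw [sum_one_sub, hBdef, ← hV, ← hk]⟩
    have h1 : (k : ℚ) ≤ maxp n par (fun v => 1 - p v) (fun _ => 1) B := by
      have := sum_le_maxp (p := fun _ => (1:ℚ)) hAfeas
      rwa [sum_one] at this
    have h2 := h B hB c' hvalsc'
    obtain ⟨A', hA', hval'⟩ := maxp_attained (par := par) (c := c')
      (p := fun _ => (1:ℚ)) (B := B) hB
    obtain ⟨hA'sub, hA'pc, hA'cost⟩ := mem_feas.mp hA'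
    have hA'card : k ≤ A'.card := by
      have : (k : ℚ) ≤ ∑ _v ∈ A', (1:ℚ) := by rw [← hval']; exact le_trans h1 h2
      rw [sum_one] at this
      exact_mod_cast this
    -- shrink A' to parent-closed A'' of size exactly k
    obtain ⟨A'', hsub'', hpc'', hcard''⟩ :=
      shrink hpar A'.card A' rfl hA'sub hA'pc k hA'card
    have hA''NR : A'' ⊆ NRs n := hsub''.trans hA'sub
    have hA''cost : ∑ v ∈ A'', c' v ≤ B := by
      refine le_trans (Finset.sum_le_sum_of_subset_of_nonneg hsub'' ?_) hA'cost
      intro v hv _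
      exact (vals_bound hvalsc' (fun w => ⟨by linarith [(hscaled w).2],
        by linarith [(hscaled w).1]⟩) v (mem_NRs.mp (hA'sub hv))).1
    have hA''p' : V ≤ ∑ v ∈ A'', p' v := by
      have hsplit : ∑ v ∈ A'', p' v = ∑ v ∈ A'', (1 - c' v) := by
        refine Finset.sum_congr rfl (fun v _ => ?_); rw [hc']; ring
      rw [hsplit, sum_one_sub, hcard'']
      rw [hBdef] at hA''cost
      linarith
    have hA''feas : A'' ∈ feas n par (fun _ => 1) (m : ℚ) := by
      refine mem_feas.mpr ⟨hA''NR, hpc'', ?_⟩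
      rw [sum_one, hcard'']
      exact_mod_cast hAcost
    have := sum_le_maxp (p := p') hA''feas
    rw [hval]
    exact le_trans hA''p' this
end
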